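/- For any closed EPCF computation ⊢ C : T and any closed λY-term ⊢ c : T* → o, the Böhm tree of C* c equals the effect tree of C in which every leaf return(V) is replaced by the Böhm tree of c V*. -/

import Mathlib

/-! The λY-calculus: simply-typed λ-calculus with a fixpoint combinator Y and
first-order constants drawn from a signature `F` with arity `ar : F → ℕ`. -/

namespace LamY

/-- Simple types: `o` and arrow types. -/
inductive Ty : Type
  | o : Ty
  | arr : Ty → Ty → Ty
  deriving DecidableEq

/-- Terms (de Bruijn representation) over a set `F` of first-order constants. -/
inductive Tm (F : Type) : Type
  | var : ℕ → Tm F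
  | lam : Tm F → Tm F
  | app : Tm F → Tm F → Tm F
  | fixY : Tm F → Tm F
  | const : F → Tm F

namespace Tm

variable {F : Type}

/-- Lifting of a renaming under a binder. -/
def upr (ρ : ℕ → ℕ) : ℕ → ℕ
  | 0 => 0
  | n + 1 => ρ n + 1

/-- Renaming of variables. -/
def rename (ρ : ℕ → ℕ) : Tm F → Tm F
  | .var n => .var (ρ n)
  | .lam M => .lam (rename (upr ρ) M)
  | .app M N => .app (rename ρ M) (rename ρ N)
  | .fixY M => .fixY (rename ρ M)
  | .const f => .const f

/-- Shift all free variables up by one. -/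
def lift (M : Tm F) : Tm F := rename Nat.succ M

/-- Lifting of a substitution under a binder. -/
def ups (σ : ℕ → Tm F) : ℕ → Tm F
  | 0 => .var 0
  | n + 1 => lift (σ n)

/-- Simultaneous substitution. -/
def subst (σ : ℕ → Tm F) : Tm F → Tm F
  | .var n => σ n
  | .lam M => .lam (subst (ups σ) M)
  | .app M N => .app (subst σ M) (subst σ N)
  | .fixY M => .fixY (subst σ M)
  | .const f => .const f

/-- Substitution `M[N/x]` of `N` for the variable `0` in `M`. -/
def subst0 (N : Tm F) (M : Tm F) : Tm F :=
  subst (fun n => match n with | 0 => N | n + 1 => .var n) M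

/-- A term applied to a list of arguments: `appArgs M [N₁,…,Nₖ] = M N₁ ⋯ Nₖ`. -/
def appArgs (M : Tm F) : List (Tm F) → Tm F
  | [] => M
  | N :: Ns => appArgs (.app M N) Ns

end Tm

open Tm

/-- Weak head reduction: β at the head, unfolding of `Y`, and reduction of the
head of an application. -/
inductive Step {F : Type} : Tm F → Tm F → Prop
  | beta (M N : Tm F) : Step (.app (.lam M) N) (subst0 N M)
  | fix (M : Tm F) : Step (.fixY M) (.app M (.fixY M))
  | appL {M M' : Tm F} (N : Tm F) : Step M M' → Step (.app M N) (.app M' N)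

/-- A term is in weak head normal form when no weak head reduction applies. -/
def WHNF {F : Type} (M : Tm F) : Prop := ¬ ∃ N, Step M N

/-- The type `o^n → o` of a first-order constant with arity `n`. -/
def constTy : ℕ → Ty
  | 0 => .o
  | n + 1 => .arr .o (constTy n)

/-- Typing judgement for λY-terms. Contexts are lists of types (de Bruijn). -/
inductive HasTy {F : Type} (ar : F → ℕ) : List Ty → Tm F → Ty → Prop
  | var {Γ n T} : Γ[n]? = some T → HasTy ar Γ (.var n) T
  | lam {Γ M T U} : HasTy ar (T :: Γ) M U → HasTy ar Γ (.lam M) (.arr T U)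
  | app {Γ M N T U} : HasTy ar Γ M (.arr T U) → HasTy ar Γ N T →
      HasTy ar Γ (.app M N) U
  | fix {Γ M T} : HasTy ar Γ M (.arr T T) → HasTy ar Γ (.fixY M) T
  | const {Γ} (f : F) : HasTy ar Γ (.const f) (constTy (ar f))

end LamY

/-! EPCF: a fine-grained call-by-value calculus with algebraic operations and
fixpoints. The signature consists of: base types `BV`, constant values `CV`
(with `cvTy : CV → BV`), and algebraic operations `Op` with parameter base
type `opPar : Op → BV` and arity `opAr : Op → ℕ`. -/

namespace EPCF

/-- EPCF types: base types, finite enumeration types `k`, and arrows. -/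
inductive ETy (BV : Type) : Type
  | base : BV → ETy BV
  | enum : ℕ → ETy BV
  | arr : ETy BV → ETy BV → ETy BV

mutual
/-- EPCF values (de Bruijn representation). -/
inductive Val (CV Op : Type) : Type
  | cv : CV → Val CV Op                        -- constant value
  | num : ℕ → ℕ → Val CV Op                    -- `num n k` is `n̲ : k`
  | var : ℕ → Val CV Op
  | lam : Comp CV Op → Val CV Op
  | fixv : Val CV Op → Val CV Op
/-- EPCF computations (de Bruijn representation). `opc σ V C` is the algebraic
operation `σ(V; x.C)` (the continuation `C` binds `x`), and
`case k V Cs` is `case(V; C₀,…,C_{k-1})`. -/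
inductive Comp (CV Op : Type) : Type
  | app : Val CV Op → Val CV Op → Comp CV Op
  | ret : Val CV Op → Comp CV Op
  | letin : Comp CV Op → Comp CV Op → Comp CV Op
  | opc : Op → Val CV Op → Comp CV Op → Comp CV Op
  | case : (k : ℕ) → Val CV Op → (Fin k → Comp CV Op) → Comp CV Op
end

variable {CV Op : Type}

/-- Lifting of a renaming under a binder. -/
def upr (ρ : ℕ → ℕ) : ℕ → ℕ
  | 0 => 0
  | n + 1 => ρ n + 1

mutual
/-- Renaming of variables in values. -/
def renV (ρ : ℕ → ℕ) : Val CV Op → Val CV Op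
  | .cv v => .cv v
  | .num n k => .num n k
  | .var n => .var (ρ n)
  | .lam C => .lam (renC (upr ρ) C)
  | .fixv V => .fixv (renV (upr ρ) V)
/-- Renaming of variables in computations. -/
def renC (ρ : ℕ → ℕ) : Comp CV Op → Comp CV Op
  | .app V W => .app (renV ρ V) (renV ρ W)
  | .ret V => .ret (renV ρ V)
  | .letin C B => .letin (renC ρ C) (renC (upr ρ) B)
  | .opc σ V C => .opc σ (renV ρ V) (renC (upr ρ) C)
  | .case k V Cs => .case k (renV ρ V) (fun i => renC ρ (Cs i))
end

/-- Lifting of a substitution under a binder. -/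
def upsE (σ : ℕ → Val CV Op) : ℕ → Val CV Op
  | 0 => .var 0
  | n + 1 => renV Nat.succ (σ n)

mutual
/-- Simultaneous substitution of values for variables, in values. -/
def subV (σ : ℕ → Val CV Op) : Val CV Op → Val CV Op
  | .cv v => .cv v
  | .num n k => .num n k
  | .var n => σ n
  | .lam C => .lam (subC (upsE σ) C)
  | .fixv V => .fixv (subV (upsE σ) V)
/-- Simultaneous substitution of values for variables, in computations. -/
def subC (σ : ℕ → Val CV Op) : Comp CV Op → Comp CV Op
  | .app V W => .app (subV σ V) (subV σ W)
  | .ret V => .ret (subV σ V)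
  | .letin C B => .letin (subC σ C) (subC (upsE σ) B)
  | .opc op V C => .opc op (subV σ V) (subC (upsE σ) C)
  | .case k V Cs => .case k (subV σ V) (fun i => subC σ (Cs i))
end

/-- Substitution `C[W/x]` of the value `W` for the variable `0`. -/
def subst0C (W : Val CV Op) (C : Comp CV Op) : Comp CV Op :=
  subC (fun n => match n with | 0 => W | n + 1 => .var n) C

/-- Substitution `V[W/x]` of the value `W` for the variable `0`. -/
def subst0V (W : Val CV Op) (V : Val CV Op) : Val CV Op :=
  subV (fun n => match n with | 0 => W | n + 1 => .var n) V

/-- The reduction relation of EPCF. -/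
inductive EStep : Comp CV Op → Comp CV Op → Prop
  | beta (C : Comp CV Op) (W : Val CV Op) :
      EStep (.app (.lam C) W) (subst0C W C)
  | fix (V W : Val CV Op) :
      EStep (.app (.fixv V) W) (.app (subst0V (.fixv V) V) W)
  | case {n k : ℕ} (h : n < k) (Cs : Fin k → Comp CV Op) :
      EStep (.case k (.num n k) Cs) (Cs ⟨n, h⟩)
  | letRet (V : Val CV Op) (C : Comp CV Op) :
      EStep (.letin (.ret V) C) (subst0C V C)
  | letCong {C C' : Comp CV Op} (B : Comp CV Op) :
      EStep C C' → EStep (.letin C B) (.letin C' B)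
  | letOp (σ : Op) (V : Val CV Op) (C D : Comp CV Op) :
      EStep (.letin (.opc σ V C) D) (.opc σ V (.letin C (renC (upr Nat.succ) D)))

/-! Typing of EPCF. -/
section Typing

variable {BV : Type} (cvTy : CV → BV) (opPar : Op → BV) (opAr : Op → ℕ)

mutual
/-- Typing judgment for EPCF values. -/
inductive VTy : List (ETy BV) → Val CV Op → ETy BV → Prop
  | cv {Γ} (v : CV) : VTy Γ (.cv v) (.base (cvTy v))
  | num {Γ n k} : n < k → VTy Γ (.num n k) (.enum k)
  | var {Γ n T} : Γ[n]? = some T → VTy Γ (.var n) T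
  | lam {Γ C T U} : CTy (T :: Γ) C U → VTy Γ (.lam C) (.arr T U)
  | fixv {Γ V T U} : VTy ((ETy.arr T U) :: Γ) V (ETy.arr T U) →
      VTy Γ (.fixv V) (.arr T U)
/-- Typing judgment for EPCF computations. -/
inductive CTy : List (ETy BV) → Comp CV Op → ETy BV → Prop
  | app {Γ V W T U} : VTy Γ V (.arr T U) → VTy Γ W T → CTy Γ (.app V W) U
  | ret {Γ V T} : VTy Γ V T → CTy Γ (.ret V) T
  | letin {Γ C B T U} : CTy Γ C T → CTy (T :: Γ) B U →
      CTy Γ (.letin C B) U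
  | opc {Γ σ V C T} : VTy Γ V (.base (opPar σ)) →
      CTy ((ETy.enum (opAr σ)) :: Γ) C T → CTy Γ (.opc σ V C) T
  | case {Γ k V T} {Cs : Fin k → Comp CV Op} : VTy Γ V (.enum k) →
      (∀ i, CTy Γ (Cs i) T) → CTy Γ (.case k V Cs) T
end

end Typing

end EPCF

namespace EPCF

open LamY LamY.Tm

variable {CV Op : Type}

/-- The λY signature `Σ_Y = {v : 0 | v ∈ CV} ∪ {σ : k+1 | (σ : B ⇝ k) ∈ Σ}`
targeted by the CPS translation. -/
def arF (opAr : Op → ℕ) : CV ⊕ Op → ℕ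
  | .inl _ => 0
  | .inr σ => opAr σ + 1

/-- Negation `¬T = T → o` of λY types. -/
def notTy (T : Ty) : Ty := .arr T .o

/-- CPS translation of EPCF types: `B* = o`, `k* = ¬(o^k)` and
`(T → U)* = T* → ¬U* → o`. -/
def trTy {BV : Type} : ETy BV → Ty
  | .base _ => .o
  | .enum k => constTy k
  | .arr T U => .arr (trTy T) (.arr (notTy (trTy U)) .o)

/-- The λY representation `λx₀…x_{k−1}.xₙ` of the numeral `n̲ : k`. -/
def numStar (k n : ℕ) : Tm (CV ⊕ Op) :=
  (List.range k).foldr (fun _ M => .lam M) (.var (k - 1 - n))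

/-! CPS translation of EPCF terms to the λY-calculus. -/
section CPS

variable (opAr : Op → ℕ)

mutual
/-- CPS translation of values. -/
def trV (opAr : Op → ℕ) : Val CV Op → Tm (CV ⊕ Op)
  | .cv v => .const (.inl v)
  | .num n k => numStar k n
  | .var n => .var n
  | .lam C => .lam (trC opAr C)
  | .fixv V => .fixY (.lam (trV opAr V))
/-- CPS translation of computations: `C*` expects a continuation `c`. -/
def trC (opAr : Op → ℕ) : Comp CV Op → Tm (CV ⊕ Op)
  | .app V W => .lam (.app (.app (lift (trV opAr V)) (lift (trV opAr W))) (.var 0))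
  | .ret V => .lam (.app (.var 0) (lift (trV opAr V)))
  | .letin C B =>
      .lam (.app (lift (trC opAr C))
        (.lam (.app (rename (upr Nat.succ) (trC opAr B)) (.var 1))))
  | .opc σ V C =>
      .lam (appArgs (.const (.inr σ))
        (lift (trV opAr V) ::
          List.ofFn (fun i : Fin (opAr σ) =>
            .app (lift (subst0 (numStar (opAr σ) i) (trC opAr C))) (.var 0))))
  | .case k V Cs =>
      .lam (appArgs (lift (trV opAr V))
        (List.ofFn fun i : Fin k => .app (lift (trC opAr (Cs i))) (.var 0)))
end

end CPS

end EPCF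

namespace LamY

open Tm

/-- A λY-term diverges when weak head reduction from it never terminates. -/
def Diverges {F : Type} (M : Tm F) : Prop :=
  ∀ N, Relation.ReflTransGen Step M N → ∃ N', Step N N'

/-- The Böhm tree of a closed ground λY-term, described position by position:
`BTAt ar M p l` holds when the Böhm tree of `M` carries the label `l` at
position `p` (`none` standing for `⊥`). -/
inductive BTAt {F : Type} (ar : F → ℕ) : Tm F → List ℕ → Option F → Prop
  | bot {M} : Diverges M → BTAt ar M [] none
  | node {M f args} :
      Relation.ReflTransGen Step M (appArgs (.const f) args) →
      args.length = ar f → BTAt ar M [] (some f)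
  | child {M f args i Mi p l} :
      Relation.ReflTransGen Step M (appArgs (.const f) args) →
      args.length = ar f → args[i]? = some Mi →
      BTAt ar Mi p l → BTAt ar M (i :: p) l

end LamY

namespace EPCF

open LamY LamY.Tm

/-- An EPCF computation diverges when its reduction never terminates. -/
def CDiverges {CV Op : Type} (C : Comp CV Op) : Prop :=
  ∀ D, Relation.ReflTransGen EStep C D → ∃ D', EStep D D'

/-- The effect tree of a closed EPCF computation `C` in which every leaf
`return(V)` has been replaced by the Böhm tree of `c V*`, described position
by position (labels are λY constants, `none` standing for `⊥`). -/
inductive Mixed {CV Op : Type} (opAr : Op → ℕ) (c : Tm (CV ⊕ Op)) :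
    Comp CV Op → List ℕ → Option (CV ⊕ Op) → Prop
  | bot {C} : CDiverges C → Mixed opAr c C [] none
  | ret {C V p l} :
      Relation.ReflTransGen EStep C (.ret V) →
      BTAt (arF opAr) (.app c (trV opAr V)) p l → Mixed opAr c C p l
  | opHead {C σ V C'} :
      Relation.ReflTransGen EStep C (.opc σ V C') →
      Mixed opAr c C [] (some (.inr σ))
  | opParam {C σ v C'} :
      Relation.ReflTransGen EStep C (.opc σ (.cv v) C') →
      Mixed opAr c C [0] (some (.inl v))
  | opChild {C σ V C' i p l} :
      Relation.ReflTransGen EStep C (.opc σ V C') →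
      i < opAr σ →
      Mixed opAr c (subst0C (.num i (opAr σ)) C') p l →
      Mixed opAr c C ((i + 1) :: p) l

end EPCF


namespace LamY
namespace Tm

variable {F : Type}

@[simp] theorem upr_zero (ρ : ℕ → ℕ) : upr ρ 0 = 0 := rfl
@[simp] theorem upr_succ (ρ : ℕ → ℕ) (n : ℕ) : upr ρ (n+1) = ρ n + 1 := rfl
@[simp] theorem ups_zero (σ : ℕ → Tm F) : ups σ 0 = .var 0 := rfl
@[simp] theorem ups_succ (σ : ℕ → Tm F) (n : ℕ) : ups σ (n+1) = lift (σ n) := rfl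

theorem upr_comp (ρ ρ' : ℕ → ℕ) : upr (fun n => ρ (ρ' n)) = fun n => upr ρ (upr ρ' n) := by
  funext n; cases n <;> rfl

theorem rename_rename (ρ ρ' : ℕ → ℕ) (M : Tm F) :
    rename ρ (rename ρ' M) = rename (fun n => ρ (ρ' n)) M := by
  induction M generalizing ρ ρ' with
  | var n => rfl
  | lam M ih => simp only [rename, ih, upr_comp]
  | app M N ihM ihN => simp only [rename, ihM, ihN]
  | fixY M ih => simp only [rename, ih]
  | const f => rfl

theorem ups_upr (σ : ℕ → Tm F) (ρ : ℕ → ℕ) :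
    (fun n => ups σ (upr ρ n)) = ups (fun n => σ (ρ n)) := by
  funext n; cases n <;> rfl

theorem subst_rename (σ : ℕ → Tm F) (ρ : ℕ → ℕ) (M : Tm F) :
    subst σ (rename ρ M) = subst (fun n => σ (ρ n)) M := by
  induction M generalizing σ ρ with
  | var n => rfl
  | lam M ih => simp only [rename, subst, ih, ups_upr]
  | app M N ihM ihN => simp only [rename, subst, ihM, ihN]
  | fixY M ih => simp only [rename, subst, ih]
  | const f => rfl

theorem rename_ups (ρ : ℕ → ℕ) (σ : ℕ → Tm F) :
    (fun n => rename (upr ρ) (ups σ n)) = ups (fun n => rename ρ (σ n)) := by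
  funext n; cases n with
  | zero => rfl
  | succ n =>
    simp only [ups_succ, lift, rename_rename]
    rfl

theorem rename_subst (ρ : ℕ → ℕ) (σ : ℕ → Tm F) (M : Tm F) :
    rename ρ (subst σ M) = subst (fun n => rename ρ (σ n)) M := by
  induction M generalizing σ ρ with
  | var n => rfl
  | lam M ih => simp only [rename, subst, ih, rename_ups]
  | app M N ihM ihN => simp only [rename, subst, ihM, ihN]
  | fixY M ih => simp only [rename, subst, ih]
  | const f => rfl

theorem subst_ups (τ σ : ℕ → Tm F) :
    (fun n => subst (ups τ) (ups σ n)) = ups (fun n => subst τ (σ n)) := by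
  funext n; cases n with
  | zero => rfl
  | succ n =>
    simp only [ups_succ, lift, subst_rename, rename_subst]

theorem subst_subst (τ σ : ℕ → Tm F) (M : Tm F) :
    subst τ (subst σ M) = subst (fun n => subst τ (σ n)) M := by
  induction M generalizing σ τ with
  | var n => rfl
  | lam M ih => simp only [subst, ih, subst_ups]
  | app M N ihM ihN => simp only [subst, ihM, ihN]
  | fixY M ih => simp only [subst, ih]
  | const f => rfl

theorem subst_var (M : Tm F) : subst (fun n => .var n) M = M := by
  induction M with
  | var n => rfl
  | lam M ih =>
    have : (ups (fun n => (.var n : Tm F))) = fun n => .var n := by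
      funext n; cases n <;> rfl
    simp only [subst, this, ih]
  | app M N ihM ihN => simp only [subst, ihM, ihN]
  | fixY M ih => simp only [subst, ih]
  | const f => rfl

theorem rename_eq_subst (ρ : ℕ → ℕ) (M : Tm F) :
    rename ρ M = subst (fun n => .var (ρ n)) M := by
  induction M generalizing ρ with
  | var n => rfl
  | lam M ih =>
    have : (ups (fun n => (.var (ρ n) : Tm F))) = fun n => .var (upr ρ n) := by
      funext n; cases n <;> rfl
    simp only [rename, subst, ih, this]
  | app M N ihM ihN => simp only [rename, subst, ihM, ihN]
  | fixY M ih => simp only [rename, subst, ih]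
  | const f => rfl

/-- the substitution used by subst0 -/
theorem subst0_def (N M : Tm F) :
    subst0 N M = subst (fun n => match n with | 0 => N | n + 1 => .var n) M := rfl

@[simp] theorem subst0_lift (N M : Tm F) : subst0 N (lift M) = M := by
  rw [subst0, lift, subst_rename]
  exact subst_var M

theorem subst_subst0 (τ : ℕ → Tm F) (N M : Tm F) :
    subst τ (subst0 N M) = subst0 (subst τ N) (subst (ups τ) M) := by
  rw [subst0, subst0, subst_subst, subst_subst]
  congr 1; funext n
  cases n with
  | zero => rfl
  | succ n => simp only [ups_succ, lift, subst_rename]; exact (subst_var _).symm ▸ rfl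

/-! appArgs lemmas -/

theorem appArgs_subst (σ : ℕ → Tm F) (as : List (Tm F)) (M : Tm F) :
    subst σ (appArgs M as) = appArgs (subst σ M) (as.map (subst σ)) := by
  induction as generalizing M with
  | nil => rfl
  | cons a as ih => simp only [appArgs, List.map_cons, ih, subst]

/-! head/args spine -/

def headOf : Tm F → Tm F
  | .app M _ => headOf M
  | M => M

def argsOf : Tm F → List (Tm F)
  | .app M N => argsOf M ++ [N]
  | _ => []

theorem headOf_appArgs (as : List (Tm F)) (M : Tm F) :
    headOf (appArgs M as) = headOf M := by
  induction as generalizing M with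
  | nil => rfl
  | cons a as ih => rw [appArgs, ih]; rfl

theorem argsOf_appArgs (as : List (Tm F)) (M : Tm F) :
    argsOf (appArgs M as) = argsOf M ++ as := by
  induction as generalizing M with
  | nil => simp [appArgs]
  | cons a as ih => rw [appArgs, ih]; simp [argsOf]

theorem appArgs_const_inj {f g : F} {as bs : List (Tm F)}
    (h : appArgs (.const f) as = appArgs (.const g) bs) : f = g ∧ as = bs := by
  have h1 := congrArg headOf h
  have h2 := congrArg argsOf h
  rw [headOf_appArgs, headOf_appArgs] at h1
  rw [argsOf_appArgs, argsOf_appArgs] at h2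
  simp only [headOf] at h1
  simp only [argsOf, List.nil_append] at h2
  exact ⟨by injection h1, h2⟩

/-! Reduction lemmas -/

theorem step_det {M N N' : Tm F} (h : Step M N) (h' : Step M N') : N = N' := by
  induction h generalizing N' with
  | beta M N => cases h' with
    | beta => rfl
    | appL _ h => cases h
  | fix M => cases h'; rfl
  | appL N hs ih => cases h' with
    | beta => cases hs
    | appL _ h => rw [ih h]

theorem step_appArgs {M M' : Tm F} (as : List (Tm F)) (h : Step M M') :
    Step (appArgs M as) (appArgs M' as) := by
  induction as generalizing M M' with
  | nil => exact h
  | cons a as ih => exact ih (Step.appL a h)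

theorem nostep_head (as : List (Tm F)) {M N : Tm F}
    (hns : ∀ K, ¬ Step M K) (hnl : ∀ B, M ≠ .lam B) :
    ¬ Step (appArgs M as) N := by
  induction as generalizing M N with
  | nil => exact hns N
  | cons a as ih =>
    refine ih (M := .app M a) (fun K hK => ?_) (fun B h => by cases h)
    cases hK with
    | beta B _ => exact hnl B rfl
    | appL _ h => exact hns _ h

theorem nostep_const (f : F) (as : List (Tm F)) {N : Tm F} :
    ¬ Step (appArgs (.const f) as) N :=
  nostep_head as (fun K h => by cases h) (fun B h => by cases h)

open Relation in
theorem rtg_eq_of_normal {M X : Tm F} (h : ReflTransGen Step M X)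
    (hn : ∀ K, ¬ Step M K) : X = M := by
  rcases h.cases_head with rfl | ⟨Y, hY, _⟩
  · rfl
  · exact absurd hY (hn Y)

open Relation in
theorem rtg_step {M M' X : Tm F} (hs : Step M M') (h : ReflTransGen Step M X)
    (hn : ∀ K, ¬ Step X K) : ReflTransGen Step M' X := by
  rcases h.cases_head with rfl | ⟨Y, hY, hYX⟩
  · exact absurd hs (hn M')
  · rwa [step_det hs hY]

open Relation in
theorem diverges_step {M M' : Tm F} (h : Step M M') (hd : Diverges M) : Diverges M' :=
  fun N hN => hd N (ReflTransGen.head h hN)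

open Relation in
theorem diverges_back {M M' : Tm F} (h : Step M M') (hd : Diverges M') : Diverges M := by
  intro N hN
  rcases hN.cases_head with rfl | ⟨Y, hY, hYN⟩
  · exact ⟨M', h⟩
  · rw [step_det hY h] at hYN
    exact hd N hYN

open Relation in
theorem diverges_nostep {M X : Tm F} (hd : Diverges M) (h : ReflTransGen Step M X)
    (hn : ∀ K, ¬ Step X K) : False := by
  obtain ⟨N', hN'⟩ := hd X h
  exact hn N' hN'

open Relation in
theorem bt_step {ar : F → ℕ} {M M' : Tm F} (h : Step M M') (p : List ℕ) (l : Option F) :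
    BTAt ar M p l ↔ BTAt ar M' p l := by
  constructor
  · intro hb
    cases hb with
    | bot hd => exact BTAt.bot (diverges_step h hd)
    | node hr hl => exact BTAt.node (rtg_step h hr (fun K => nostep_const _ _)) hl
    | child hr hl hi hb =>
      exact BTAt.child (rtg_step h hr (fun K => nostep_const _ _)) hl hi hb
  · intro hb
    cases hb with
    | bot hd => exact BTAt.bot (diverges_back h hd)
    | node hr hl => exact BTAt.node (ReflTransGen.head h hr) hl
    | child hr hl hi hb => exact BTAt.child (ReflTransGen.head h hr) hl hi hb

open Relation in
theorem bt_rtg {ar : F → ℕ} {M M' : Tm F} (h : ReflTransGen Step M M') (p : List ℕ)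
    (l : Option F) : BTAt ar M p l ↔ BTAt ar M' p l := by
  induction h using ReflTransGen.head_induction_on with
  | refl => rfl
  | head hs _ ih => exact (bt_step hs p l).trans ih

open Relation in
theorem btat_head {ar : F → ℕ} {f : F} {args : List (Tm F)} (hl : args.length = ar f)
    (l : Option F) : BTAt ar (appArgs (.const f) args) [] l ↔ l = some f := by
  constructor
  · intro hb
    cases hb with
    | bot hd => exact absurd (diverges_nostep hd ReflTransGen.refl
        (fun K => nostep_const _ _)) (by simp)
    | node hr _ =>
      have := rtg_eq_of_normal hr (fun K => nostep_const _ _)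
      obtain ⟨rfl, -⟩ := appArgs_const_inj this.symm
      rfl
  · rintro rfl
    exact BTAt.node ReflTransGen.refl hl

open Relation in
theorem btat_child {ar : F → ℕ} {f : F} {args : List (Tm F)} (hl : args.length = ar f)
    (i : ℕ) (p : List ℕ) (l : Option F) :
    BTAt ar (appArgs (.const f) args) (i :: p) l ↔
      ∃ Mi, args[i]? = some Mi ∧ BTAt ar Mi p l := by
  constructor
  · intro hb
    cases hb with
    | child hr _ hi hb =>
      have := rtg_eq_of_normal hr (fun K => nostep_const _ _)
      obtain ⟨rfl, rfl⟩ := appArgs_const_inj this.symm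
      exact ⟨_, hi, hb⟩
  · rintro ⟨Mi, hi, hb⟩
    exact BTAt.child ReflTransGen.refl hl hi hb

/-! Counting steps -/

inductive NSteps : Tm F → ℕ → Tm F → Prop
  | refl (M : Tm F) : NSteps M 0 M
  | head {M M' n N} : Step M M' → NSteps M' n N → NSteps M (n+1) N

open Relation in
theorem NSteps.toRTG {M n N : Tm F → ℕ → Tm F → Prop} : True := trivial

open Relation in
theorem nsteps_rtg {M N : Tm F} {n : ℕ} (h : NSteps M n N) : ReflTransGen Step M N := by
  induction h with
  | refl => exact ReflTransGen.refl
  | head hs _ ih => exact ReflTransGen.head hs ih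

open Relation in
theorem rtg_nsteps {M N : Tm F} (h : ReflTransGen Step M N) : ∃ n, NSteps M n N := by
  induction h using ReflTransGen.head_induction_on with
  | refl => exact ⟨0, NSteps.refl N⟩
  | head hs _ ih => obtain ⟨n, hn⟩ := ih; exact ⟨n+1, NSteps.head hs hn⟩

theorem NSteps.trans {M X N : Tm F} {m n : ℕ} (h1 : NSteps M m X) (h2 : NSteps X n N) :
    NSteps M (m + n) N := by
  induction h1 with
  | refl => simpa using h2
  | head hs _ ih =>
    have := NSteps.head hs (ih h2)
    rw [Nat.add_right_comm]
    exact this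

theorem nsteps_appArgs {M M' : Tm F} {n : ℕ} (as : List (Tm F)) (h : NSteps M n M') :
    NSteps (appArgs M as) n (appArgs M' as) := by
  induction h with
  | refl => exact NSteps.refl _
  | head hs _ ih => exact NSteps.head (step_appArgs as hs) ih

theorem nsteps_det_prefix {M X Z : Tm F} {m d : ℕ} (h1 : NSteps M m X) (h2 : NSteps M d Z)
    (hn : ∀ K, ¬ Step Z K) : m ≤ d ∧ NSteps X (d - m) Z := by
  induction h1 generalizing d with
  | refl => simpa using h2
  | @head M₀ M₁ m' X₀ hs h ih =>
    cases h2 with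
    | refl => exact absurd hs (hn _)
    | @head _ M₂ d' _ hs' h2' =>
      rw [← step_det hs hs'] at h2'
      obtain ⟨ha, hb⟩ := ih h2'
      exact ⟨by omega, by simpa [Nat.succ_sub_succ] using hb⟩

end Tm
end LamY

namespace LamY
namespace Tm

variable {F : Type}

theorem rename_id (M : Tm F) : rename (fun n => n) M = M := by
  rw [rename_eq_subst]; exact subst_var M

def lamN : ℕ → Tm F → Tm F
  | 0, M => M
  | n+1, M => .lam (lamN n M)

theorem lamN_lam (k : ℕ) (M : Tm F) : lamN k (.lam M) = .lam (lamN k M) := by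
  induction k with
  | zero => rfl
  | succ k ih => simp only [lamN, ih]

theorem foldr_lam_range (k : ℕ) (b : Tm F) :
    (List.range k).foldr (fun _ M => .lam M) b = lamN k b := by
  induction k generalizing b with
  | zero => rfl
  | succ k ih =>
    rw [List.range_succ, List.foldr_append]
    simp only [List.foldr_cons, List.foldr_nil]
    rw [ih, lamN_lam]
    rfl


def upsN : ℕ → (ℕ → Tm F) → (ℕ → Tm F)
  | 0, σ => σ
  | m+1, σ => ups (upsN m σ)

def uprN : ℕ → (ℕ → ℕ) → (ℕ → ℕ)
  | 0, ρ => ρ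
  | m+1, ρ => upr (uprN m ρ)

theorem upsN_ups (m : ℕ) (σ : ℕ → Tm F) : upsN m (ups σ) = ups (upsN m σ) := by
  induction m with
  | zero => rfl
  | succ m ih => simp only [upsN, ih]

theorem uprN_upr (m : ℕ) (ρ : ℕ → ℕ) : uprN m (upr ρ) = upr (uprN m ρ) := by
  induction m with
  | zero => rfl
  | succ m ih => simp only [uprN, ih]

theorem subst_lamN (σ : ℕ → Tm F) (m : ℕ) (M : Tm F) :
    subst σ (lamN m M) = lamN m (subst (upsN m σ) M) := by
  induction m generalizing σ with
  | zero => rfl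
  | succ m ih => simp only [lamN, subst, ih, upsN, upsN_ups]

theorem rename_lamN (ρ : ℕ → ℕ) (m : ℕ) (M : Tm F) :
    rename ρ (lamN m M) = lamN m (rename (uprN m ρ) M) := by
  induction m generalizing ρ with
  | zero => rfl
  | succ m ih => simp only [lamN, rename, ih, uprN, uprN_upr]

theorem upsN_lt (σ : ℕ → Tm F) : ∀ {m n : ℕ}, n < m → upsN m σ n = .var n := by
  intro m
  induction m with
  | zero => omega
  | succ m ih =>
    intro n hn
    cases n with
    | zero => rfl
    | succ n =>
      show lift (upsN m σ n) = _
      rw [ih (by omega)]; rfl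

theorem uprN_lt (ρ : ℕ → ℕ) : ∀ {m n : ℕ}, n < m → uprN m ρ n = n := by
  intro m
  induction m with
  | zero => omega
  | succ m ih =>
    intro n hn
    cases n with
    | zero => rfl
    | succ n =>
      show uprN m ρ n + 1 = _
      rw [ih (by omega)]

theorem upsN_ge (σ : ℕ → Tm F) (j : ℕ) : ∀ m, upsN m σ (m + j) = rename (fun i => i + m) (σ j) := by
  intro m
  induction m with
  | zero => simp only [Nat.zero_add, upsN]; exact (rename_id _).symm
  | succ m ih =>
    have : m + 1 + j = (m + j) + 1 := by omega
    rw [this]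
    show lift (upsN m σ (m + j)) = _
    rw [ih, lift, rename_rename]
    congr 1

/-- projection reduction for iterated lambdas -/
theorem red_lamN_proj : ∀ (k n : ℕ) (as : List (Tm F)) (a : Tm F), n < k →
    as.length = k → as[n]? = some a →
    ∃ m, NSteps (appArgs (lamN k (.var (k - 1 - n))) as) m a := by
  intro k
  induction k with
  | zero => omega
  | succ k ih =>
    intro n as a hn hlen hget
    match as with
    | [] => simp at hlen
    | a0 :: as' =>
      have hlen' : as'.length = k := by simpa using hlen
      cases n with
      | zero =>
        simp only [List.getElem?_cons_zero, Option.some.injEq] at hget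
        subst hget
        rw [show k + 1 - 1 - 0 = k + 0 from by omega]
        -- auxiliary: discard remaining arguments
        have aux : ∀ (m : ℕ) (bs : List (Tm F)) (b : Tm F), bs.length = m →
            ∃ c, NSteps (appArgs (lamN m (rename (fun i => i + m) b)) bs) c b := by
          intro m
          induction m with
          | zero =>
            intro bs b hbs
            rw [List.length_eq_zero_iff] at hbs
            subst hbs
            exact ⟨0, by simpa [lamN, rename_id, appArgs] using NSteps.refl b⟩
          | succ m ihm =>
            intro bs b hbs
            match bs with
            | [] => simp at hbs
            | b0 :: bs' =>
              have hbs' : bs'.length = m := by simpa using hbs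
              obtain ⟨c, hc⟩ := ihm bs' b (by simpa using hbs)
              refine ⟨c + 1, NSteps.head (step_appArgs bs' ?_) hc⟩
              have h := Step.beta (lamN m (rename (fun i => i + (m+1)) b)) b0
              rw [subst0_def, subst_lamN, subst_rename] at h
              convert h using 2
              · rfl
              rw [rename_eq_subst]
              congr 1
              funext i
              show (Tm.var (i + m) : Tm F) = upsN m _ (i + (m+1))
              rw [show i + (m+1) = m + (i+1) from by omega, upsN_ge]
              rfl
        obtain ⟨c, hc⟩ := aux k as' a0 hlen'
        refine ⟨c + 1, NSteps.head (step_appArgs as' ?_) hc⟩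
        have h := Step.beta (lamN k (.var (k + 0))) a0
        rw [subst0_def, subst_lamN] at h
        convert h using 2
        · rfl
        exact (upsN_ge (fun n => match n with | 0 => a0 | n+1 => .var n) 0 k).symm
      | succ n' =>
        have hn' : n' < k := by omega
        have hlt : k - 1 - n' < k := by omega
        have hget' : as'[n']? = some a := by simpa using hget
        obtain ⟨c, hc⟩ := ih n' as' a hn' hlen' hget'
        rw [show k + 1 - 1 - (n' + 1) = k - 1 - n' from by omega]
        refine ⟨c + 1, NSteps.head (step_appArgs as' ?_) hc⟩
        have h := Step.beta (lamN k (.var (k - 1 - n'))) a0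
        rw [subst0_def, subst_lamN] at h
        convert h using 2
        · rfl
        exact (upsN_lt (fun n => match n with | 0 => a0 | n+1 => .var n) hlt).symm

end Tm
end LamY

namespace EPCF

open LamY.Tm

variable {CV Op : Type}

theorem upr_eq (ρ : ℕ → ℕ) : EPCF.upr ρ = LamY.Tm.upr ρ := by
  funext n; cases n <;> rfl

theorem numStar_eq (k n : ℕ) : (numStar k n : LamY.Tm (CV ⊕ Op)) = lamN k (.var (k - 1 - n)) :=
  foldr_lam_range k _

theorem rename_numStar (ρ : ℕ → ℕ) {k : ℕ} (n : ℕ) (hk : 0 < k) :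
    rename ρ (numStar k n : LamY.Tm (CV ⊕ Op)) = numStar k n := by
  rw [numStar_eq, rename_lamN, rename, uprN_lt ρ (by omega)]

theorem subst_numStar (σ : ℕ → LamY.Tm (CV ⊕ Op)) {k : ℕ} (n : ℕ) (hk : 0 < k) :
    subst σ (numStar k n : LamY.Tm (CV ⊕ Op)) = numStar k n := by
  rw [numStar_eq, subst_lamN, subst, upsN_lt σ (by omega)]


end EPCF

namespace EPCF

variable {CV Op : Type}

@[simp] theorem upsE_zero (σ : ℕ → Val CV Op) : upsE σ 0 = .var 0 := rfl
@[simp] theorem upsE_succ (σ : ℕ → Val CV Op) (n : ℕ) : upsE σ (n+1) = renV Nat.succ (σ n) := rfl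

theorem upsE_upr (σ : ℕ → Val CV Op) (ρ : ℕ → ℕ) :
    (fun n => upsE σ (EPCF.upr ρ n)) = upsE (fun n => σ (ρ n)) := by
  funext n; cases n <;> rfl

mutual
theorem subV_renV (σ : ℕ → Val CV Op) (ρ : ℕ → ℕ) :
    ∀ V : Val CV Op, subV σ (renV ρ V) = subV (fun n => σ (ρ n)) V
  | .cv v => rfl
  | .num n k => rfl
  | .var n => rfl
  | .lam C => by
    show Val.lam (subC (upsE σ) (renC (EPCF.upr ρ) C)) = Val.lam (subC (upsE fun n => σ (ρ n)) C)
    rw [subC_renC _ _ C, upsE_upr]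
  | .fixv V => by
    show Val.fixv (subV (upsE σ) (renV (EPCF.upr ρ) V)) = Val.fixv (subV (upsE fun n => σ (ρ n)) V)
    rw [subV_renV _ _ V, upsE_upr]

theorem subC_renC (σ : ℕ → Val CV Op) (ρ : ℕ → ℕ) :
    ∀ C : Comp CV Op, subC σ (renC ρ C) = subC (fun n => σ (ρ n)) C
  | .app V W => by
    show Comp.app (subV σ (renV ρ V)) (subV σ (renV ρ W)) = _
    rw [subV_renV _ _ V, subV_renV _ _ W]; rfl
  | .ret V => by
    show Comp.ret (subV σ (renV ρ V)) = _
    rw [subV_renV _ _ V]; rfl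
  | .letin C B => by
    show Comp.letin (subC σ (renC ρ C)) (subC (upsE σ) (renC (EPCF.upr ρ) B)) = _
    rw [subC_renC _ _ C, subC_renC _ _ B, upsE_upr]; rfl
  | .opc op V C => by
    show Comp.opc op (subV σ (renV ρ V)) (subC (upsE σ) (renC (EPCF.upr ρ) C)) = _
    rw [subV_renV _ _ V, subC_renC _ _ C, upsE_upr]; rfl
  | .case k V Cs => by
    show Comp.case k (subV σ (renV ρ V)) (fun i => subC σ (renC ρ (Cs i))) = _
    rw [subV_renV _ _ V]
    show _ = Comp.case k _ (fun i => subC (fun n => σ (ρ n)) (Cs i))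
    congr 1
    funext i
    exact subC_renC _ _ (Cs i)
end

theorem upsE_var : (upsE (fun n => (.var n : Val CV Op))) = fun n => .var n := by
  funext n; cases n <;> rfl

mutual
theorem subV_id : ∀ V : Val CV Op, subV (fun n => .var n) V = V
  | .cv v => rfl
  | .num n k => rfl
  | .var n => rfl
  | .lam C => by
    show Val.lam (subC (upsE fun n => .var n) C) = _
    rw [upsE_var, subC_id C]
  | .fixv V => by
    show Val.fixv (subV (upsE fun n => .var n) V) = _
    rw [upsE_var, subV_id V]

theorem subC_id : ∀ C : Comp CV Op, subC (fun n => .var n) C = C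
  | .app V W => by
    show Comp.app (subV _ V) (subV _ W) = _
    rw [subV_id V, subV_id W]
  | .ret V => by
    show Comp.ret (subV _ V) = _
    rw [subV_id V]
  | .letin C B => by
    show Comp.letin (subC _ C) (subC (upsE fun n => .var n) B) = _
    rw [upsE_var, subC_id C, subC_id B]
  | .opc op V C => by
    show Comp.opc op (subV _ V) (subC (upsE fun n => .var n) C) = _
    rw [upsE_var, subV_id V, subC_id C]
  | .case k V Cs => by
    show Comp.case k (subV _ V) (fun i => subC _ (Cs i)) = _
    rw [subV_id V]
    congr 1
    funext i
    exact subC_id (Cs i)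
end

/-! EStep facts -/

theorem nostep_ret {V : Val CV Op} {D : Comp CV Op} : ¬ EStep (.ret V) D := by
  intro h; cases h

theorem nostep_opc {σ : Op} {V : Val CV Op} {C D : Comp CV Op} : ¬ EStep (.opc σ V C) D := by
  intro h; cases h

theorem estep_det {C D D' : Comp CV Op} (h : EStep C D) (h' : EStep C D') : D = D' := by
  induction h generalizing D' with
  | beta C W => cases h'; rfl
  | fix V W => cases h'; rfl
  | case hlt Cs => cases h'; rfl
  | letRet V C => cases h' with
    | letRet => rfl
    | letCong _ h => exact absurd h nostep_ret
  | letCong B hs ih => cases h' with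
    | letRet => exact absurd hs nostep_ret
    | letCong _ h => rw [ih h]
    | letOp => exact absurd hs nostep_opc
  | letOp σ V C D => cases h' with
    | letOp => rfl
    | letCong _ h => exact absurd h nostep_opc

open Relation in
theorem ertg_eq_of_normal {C X : Comp CV Op} (h : ReflTransGen EStep C X)
    (hn : ∀ K, ¬ EStep C K) : X = C := by
  rcases h.cases_head with rfl | ⟨Y, hY, _⟩
  · rfl
  · exact absurd hY (hn Y)

open Relation in
theorem ertg_step {C C' X : Comp CV Op} (hs : EStep C C') (h : ReflTransGen EStep C X)
    (hn : ∀ K, ¬ EStep X K) : ReflTransGen EStep C' X := by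
  rcases h.cases_head with rfl | ⟨Y, hY, hYX⟩
  · exact absurd hs (hn C')
  · rwa [estep_det hs hY]

open Relation in
theorem cdiverges_step {C C' : Comp CV Op} (h : EStep C C') (hd : CDiverges C) :
    CDiverges C' := fun D hD => hd D (ReflTransGen.head h hD)

open Relation in
theorem cdiverges_nostep {C X : Comp CV Op} (hd : CDiverges C) (h : ReflTransGen EStep C X)
    (hn : ∀ K, ¬ EStep X K) : False := by
  obtain ⟨D', hD'⟩ := hd X h
  exact hn D' hD'

open Relation in
theorem ertg_normal_unique {C A B : Comp CV Op} (hA : ReflTransGen EStep C A)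
    (hnA : ∀ K, ¬ EStep A K) (hB : ReflTransGen EStep C B) (hnB : ∀ K, ¬ EStep B K) :
    A = B := by
  induction hA using ReflTransGen.head_induction_on with
  | refl => exact (ertg_eq_of_normal hB hnA).symm
  | head hs _ ih =>
    rcases hB.cases_head with rfl | ⟨Y, hY, hYB⟩
    · exact absurd hs (hnB _)
    · rw [← estep_det hs hY] at hYB
      exact ih hYB

open Relation in
theorem ertg_letin {C C' B : Comp CV Op} (h : ReflTransGen EStep C C') :
    ReflTransGen EStep (.letin C B) (.letin C' B) := by
  induction h using ReflTransGen.head_induction_on with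
  | refl => exact ReflTransGen.refl
  | head hs _ ih => exact ReflTransGen.head (EStep.letCong _ hs) ih

end EPCF

namespace EPCF

variable {CV Op : Type} {BV : Type} {cvTy : CV → BV} {opPar : Op → BV} {opAr : Op → ℕ}

@[simp] theorem uprE_zero (ρ : ℕ → ℕ) : EPCF.upr ρ 0 = 0 := rfl
@[simp] theorem uprE_succ (ρ : ℕ → ℕ) (n : ℕ) : EPCF.upr ρ (n+1) = ρ n + 1 := rfl

def RenCtx (ρ : ℕ → ℕ) (Γ Δ : List (ETy BV)) : Prop :=
  ∀ n U, Γ[n]? = some U → Δ[ρ n]? = some U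

theorem renCtx_up {ρ : ℕ → ℕ} {Γ Δ : List (ETy BV)} (T : ETy BV) (h : RenCtx ρ Γ Δ) :
    RenCtx (EPCF.upr ρ) (T :: Γ) (T :: Δ) := by
  intro n U hn
  cases n with
  | zero => simpa using hn
  | succ n => simpa using h n U (by simpa using hn)

theorem renCtx_succ (T : ETy BV) (Δ : List (ETy BV)) : RenCtx Nat.succ Δ (T :: Δ) := by
  intro n U hn; simpa using hn

theorem renV_ty {Γ : List (ETy BV)} {V : Val CV Op} {T : ETy BV}
    (h : VTy cvTy opPar opAr Γ V T) :
    ∀ ⦃Δ : List (ETy BV)⦄ ⦃ρ : ℕ → ℕ⦄, RenCtx ρ Γ Δ → VTy cvTy opPar opAr Δ (renV ρ V) T := by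
  refine VTy.rec
    (motive_1 := fun Γ V T _ => ∀ ⦃Δ ρ⦄, RenCtx ρ Γ Δ → VTy cvTy opPar opAr Δ (renV ρ V) T)
    (motive_2 := fun Γ C T _ => ∀ ⦃Δ ρ⦄, RenCtx ρ Γ Δ → CTy cvTy opPar opAr Δ (renC ρ C) T)
    ?_ ?_ ?_ ?_ ?_ ?_ ?_ ?_ ?_ ?_ h
  · intro Γ v Δ ρ hρ; exact VTy.cv v
  · intro Γ n k hk Δ ρ hρ; exact VTy.num hk
  · intro Γ n T hn Δ ρ hρ; exact VTy.var (hρ _ _ hn)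
  · intro Γ C T U hC ih Δ ρ hρ; exact VTy.lam (ih (renCtx_up T hρ))
  · intro Γ V T U hV ih Δ ρ hρ; exact VTy.fixv (ih (renCtx_up _ hρ))
  · intro Γ V W T U hV hW ihV ihW Δ ρ hρ; exact CTy.app (ihV hρ) (ihW hρ)
  · intro Γ V T hV ih Δ ρ hρ; exact CTy.ret (ih hρ)
  · intro Γ C B T U hC hB ihC ihB Δ ρ hρ; exact CTy.letin (ihC hρ) (ihB (renCtx_up _ hρ))
  · intro Γ σ V C T hV hC ihV ihC Δ ρ hρ; exact CTy.opc (ihV hρ) (ihC (renCtx_up _ hρ))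
  · intro Γ k V T Cs hV hCs ihV ihCs Δ ρ hρ; exact CTy.case (ihV hρ) (fun i => ihCs i hρ)

theorem renC_ty {Γ : List (ETy BV)} {C : Comp CV Op} {T : ETy BV}
    (h : CTy cvTy opPar opAr Γ C T) :
    ∀ ⦃Δ : List (ETy BV)⦄ ⦃ρ : ℕ → ℕ⦄, RenCtx ρ Γ Δ → CTy cvTy opPar opAr Δ (renC ρ C) T := by
  refine CTy.rec
    (motive_1 := fun Γ V T _ => ∀ ⦃Δ ρ⦄, RenCtx ρ Γ Δ → VTy cvTy opPar opAr Δ (renV ρ V) T)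
    (motive_2 := fun Γ C T _ => ∀ ⦃Δ ρ⦄, RenCtx ρ Γ Δ → CTy cvTy opPar opAr Δ (renC ρ C) T)
    ?_ ?_ ?_ ?_ ?_ ?_ ?_ ?_ ?_ ?_ h
  · intro Γ v Δ ρ hρ; exact VTy.cv v
  · intro Γ n k hk Δ ρ hρ; exact VTy.num hk
  · intro Γ n T hn Δ ρ hρ; exact VTy.var (hρ _ _ hn)
  · intro Γ C T U hC ih Δ ρ hρ; exact VTy.lam (ih (renCtx_up T hρ))
  · intro Γ V T U hV ih Δ ρ hρ; exact VTy.fixv (ih (renCtx_up _ hρ))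
  · intro Γ V W T U hV hW ihV ihW Δ ρ hρ; exact CTy.app (ihV hρ) (ihW hρ)
  · intro Γ V T hV ih Δ ρ hρ; exact CTy.ret (ih hρ)
  · intro Γ C B T U hC hB ihC ihB Δ ρ hρ; exact CTy.letin (ihC hρ) (ihB (renCtx_up _ hρ))
  · intro Γ σ V C T hV hC ihV ihC Δ ρ hρ; exact CTy.opc (ihV hρ) (ihC (renCtx_up _ hρ))
  · intro Γ k V T Cs hV hCs ihV ihCs Δ ρ hρ; exact CTy.case (ihV hρ) (fun i => ihCs i hρ)

def SubCtx (σ : ℕ → Val CV Op) (Γ Δ : List (ETy BV)) : Prop :=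
  ∀ n U, Γ[n]? = some U → VTy cvTy opPar opAr Δ (σ n) U

theorem subCtx_up {σ : ℕ → Val CV Op} {Γ Δ : List (ETy BV)} (T : ETy BV)
    (h : SubCtx (cvTy := cvTy) (opPar := opPar) (opAr := opAr) σ Γ Δ) :
    SubCtx (cvTy := cvTy) (opPar := opPar) (opAr := opAr) (upsE σ) (T :: Γ) (T :: Δ) := by
  intro n U hn
  cases n with
  | zero =>
    simp only [List.getElem?_cons_zero, Option.some.injEq] at hn
    subst hn
    exact VTy.var (by simp)
  | succ n =>
    exact renV_ty (h n U (by simpa using hn)) (renCtx_succ T Δ)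

theorem subV_ty {Γ : List (ETy BV)} {V : Val CV Op} {T : ETy BV}
    (h : VTy cvTy opPar opAr Γ V T) :
    ∀ ⦃Δ : List (ETy BV)⦄ ⦃σ : ℕ → Val CV Op⦄,
      SubCtx (cvTy := cvTy) (opPar := opPar) (opAr := opAr) σ Γ Δ →
      VTy cvTy opPar opAr Δ (subV σ V) T := by
  refine VTy.rec
    (motive_1 := fun Γ V T _ => ∀ ⦃Δ σ⦄,
      SubCtx (cvTy := cvTy) (opPar := opPar) (opAr := opAr) σ Γ Δ → VTy cvTy opPar opAr Δ (subV σ V) T)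
    (motive_2 := fun Γ C T _ => ∀ ⦃Δ σ⦄,
      SubCtx (cvTy := cvTy) (opPar := opPar) (opAr := opAr) σ Γ Δ → CTy cvTy opPar opAr Δ (subC σ C) T)
    ?_ ?_ ?_ ?_ ?_ ?_ ?_ ?_ ?_ ?_ h
  · intro Γ v Δ σ hσ; exact VTy.cv v
  · intro Γ n k hk Δ σ hσ; exact VTy.num hk
  · intro Γ n T hn Δ σ hσ; exact hσ _ _ hn
  · intro Γ C T U hC ih Δ σ hσ; exact VTy.lam (ih (subCtx_up T hσ))
  · intro Γ V T U hV ih Δ σ hσ; exact VTy.fixv (ih (subCtx_up _ hσ))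
  · intro Γ V W T U hV hW ihV ihW Δ σ hσ; exact CTy.app (ihV hσ) (ihW hσ)
  · intro Γ V T hV ih Δ σ hσ; exact CTy.ret (ih hσ)
  · intro Γ C B T U hC hB ihC ihB Δ σ hσ; exact CTy.letin (ihC hσ) (ihB (subCtx_up _ hσ))
  · intro Γ σ' V C T hV hC ihV ihC Δ σ hσ; exact CTy.opc (ihV hσ) (ihC (subCtx_up _ hσ))
  · intro Γ k V T Cs hV hCs ihV ihCs Δ σ hσ; exact CTy.case (ihV hσ) (fun i => ihCs i hσ)

theorem subC_ty {Γ : List (ETy BV)} {C : Comp CV Op} {T : ETy BV}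
    (h : CTy cvTy opPar opAr Γ C T) :
    ∀ ⦃Δ : List (ETy BV)⦄ ⦃σ : ℕ → Val CV Op⦄,
      SubCtx (cvTy := cvTy) (opPar := opPar) (opAr := opAr) σ Γ Δ →
      CTy cvTy opPar opAr Δ (subC σ C) T := by
  refine CTy.rec
    (motive_1 := fun Γ V T _ => ∀ ⦃Δ σ⦄,
      SubCtx (cvTy := cvTy) (opPar := opPar) (opAr := opAr) σ Γ Δ → VTy cvTy opPar opAr Δ (subV σ V) T)
    (motive_2 := fun Γ C T _ => ∀ ⦃Δ σ⦄,
      SubCtx (cvTy := cvTy) (opPar := opPar) (opAr := opAr) σ Γ Δ → CTy cvTy opPar opAr Δ (subC σ C) T)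
    ?_ ?_ ?_ ?_ ?_ ?_ ?_ ?_ ?_ ?_ h
  · intro Γ v Δ σ hσ; exact VTy.cv v
  · intro Γ n k hk Δ σ hσ; exact VTy.num hk
  · intro Γ n T hn Δ σ hσ; exact hσ _ _ hn
  · intro Γ C T U hC ih Δ σ hσ; exact VTy.lam (ih (subCtx_up T hσ))
  · intro Γ V T U hV ih Δ σ hσ; exact VTy.fixv (ih (subCtx_up _ hσ))
  · intro Γ V W T U hV hW ihV ihW Δ σ hσ; exact CTy.app (ihV hσ) (ihW hσ)
  · intro Γ V T hV ih Δ σ hσ; exact CTy.ret (ih hσ)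
  · intro Γ C B T U hC hB ihC ihB Δ σ hσ; exact CTy.letin (ihC hσ) (ihB (subCtx_up _ hσ))
  · intro Γ σ' V C T hV hC ihV ihC Δ σ hσ; exact CTy.opc (ihV hσ) (ihC (subCtx_up _ hσ))
  · intro Γ k V T Cs hV hCs ihV ihCs Δ σ hσ; exact CTy.case (ihV hσ) (fun i => ihCs i hσ)

theorem subCtx_single {Γ : List (ETy BV)} {W : Val CV Op} {T : ETy BV}
    (hW : VTy cvTy opPar opAr Γ W T) :
    SubCtx (cvTy := cvTy) (opPar := opPar) (opAr := opAr)
      (fun n => match n with | 0 => W | n + 1 => .var n) (T :: Γ) Γ := by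
  intro n U hn
  cases n with
  | zero =>
    simp only [List.getElem?_cons_zero, Option.some.injEq] at hn
    subst hn; exact hW
  | succ n => exact VTy.var (by simpa using hn)

theorem subst0C_ty {Γ : List (ETy BV)} {C : Comp CV Op} {W : Val CV Op} {T U : ETy BV}
    (hC : CTy cvTy opPar opAr (T :: Γ) C U) (hW : VTy cvTy opPar opAr Γ W T) :
    CTy cvTy opPar opAr Γ (subst0C W C) U :=
  subC_ty hC (subCtx_single hW)

theorem subst0V_ty {Γ : List (ETy BV)} {V W : Val CV Op} {T U : ETy BV}
    (hV : VTy cvTy opPar opAr (T :: Γ) V U) (hW : VTy cvTy opPar opAr Γ W T) :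
    VTy cvTy opPar opAr Γ (subst0V W V) U :=
  subV_ty hV (subCtx_single hW)

/-! preservation -/

theorem preservation {Γ : List (ETy BV)} {C D : Comp CV Op} {T : ETy BV}
    (hs : EStep C D) (h : CTy cvTy opPar opAr Γ C T) : CTy cvTy opPar opAr Γ D T := by
  induction hs generalizing T with
  | beta C W =>
    cases h with | app hV hW =>
    cases hV with | lam hC =>
    exact subst0C_ty hC hW
  | fix V W =>
    cases h with | app hV hW =>
    cases hV with | fixv hV' =>
    exact CTy.app (subst0V_ty hV' (VTy.fixv hV')) hW
  | case hlt Cs =>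
    cases h with | case hV hCs =>
    exact hCs _
  | letRet V C =>
    cases h with | letin hC hB =>
    cases hC with | ret hV =>
    exact subst0C_ty hB hV
  | letCong B hs ih =>
    cases h with | letin hC hB =>
    exact CTy.letin (ih hC) hB
  | letOp σ V C D =>
    cases h with | letin hC hB =>
    cases hC with | opc hV hC' =>
    refine CTy.opc hV (CTy.letin hC' (renC_ty hB ?_))
    intro n U hn
    cases n with
    | zero => simpa using hn
    | succ n =>
      show _ = some U
      simpa using hn

open Relation in
theorem preservation_rtg {Γ : List (ETy BV)} {C D : Comp CV Op} {T : ETy BV}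
    (hs : ReflTransGen EStep C D) (h : CTy cvTy opPar opAr Γ C T) :
    CTy cvTy opPar opAr Γ D T := by
  induction hs using ReflTransGen.head_induction_on with
  | refl => exact h
  | head h1 _ ih => exact ih (preservation h1 h)

/-! canonical forms -/

theorem canon_arr {V : Val CV Op} {T U : ETy BV}
    (h : VTy cvTy opPar opAr [] V (.arr T U)) :
    (∃ C, V = .lam C) ∨ (∃ W, V = .fixv W) := by
  cases h with
  | var hn => simp at hn
  | lam _ => exact Or.inl ⟨_, rfl⟩
  | fixv _ => exact Or.inr ⟨_, rfl⟩

theorem canon_enum {V : Val CV Op} {k : ℕ}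
    (h : VTy cvTy opPar opAr [] V (.enum k)) : ∃ n, n < k ∧ V = .num n k := by
  cases h with
  | var hn => simp at hn
  | num hk => exact ⟨_, hk, rfl⟩

theorem canon_base {V : Val CV Op} {b : BV}
    (h : VTy cvTy opPar opAr [] V (.base b)) : ∃ v, V = .cv v := by
  cases h with
  | var hn => simp at hn
  | cv v => exact ⟨v, rfl⟩

/-! progress -/

theorem progress : ∀ (C : Comp CV Op) (T : ETy BV), CTy cvTy opPar opAr [] C T →
    (∃ V, C = .ret V) ∨ (∃ σ V C', C = .opc σ V C') ∨ (∃ D, EStep C D)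
  | .ret V, _, _ => Or.inl ⟨V, rfl⟩
  | .opc σ V C', _, _ => Or.inr (Or.inl ⟨σ, V, C', rfl⟩)
  | .app V W, T, h => by
    cases h with | app hV hW =>
    rcases canon_arr hV with ⟨C, rfl⟩ | ⟨V', rfl⟩
    · exact Or.inr (Or.inr ⟨_, EStep.beta C W⟩)
    · exact Or.inr (Or.inr ⟨_, EStep.fix V' W⟩)
  | .case k V Cs, T, h => by
    cases h with | case hV hCs =>
    obtain ⟨n, hn, rfl⟩ := canon_enum hV
    exact Or.inr (Or.inr ⟨_, EStep.case hn Cs⟩)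
  | .letin C B, T, h => by
    cases h with | letin hC hB =>
    rcases progress C _ hC with ⟨V, rfl⟩ | ⟨σ, V, C', rfl⟩ | ⟨D, hD⟩
    · exact Or.inr (Or.inr ⟨_, EStep.letRet V B⟩)
    · exact Or.inr (Or.inr ⟨_, EStep.letOp σ V C' B⟩)
    · exact Or.inr (Or.inr ⟨_, EStep.letCong B hD⟩)

end EPCF

namespace LamY
namespace Tm

variable {F : Type}

theorem rename_appArgs (ρ : ℕ → ℕ) (as : List (Tm F)) (M : Tm F) :
    rename ρ (appArgs M as) = appArgs (rename ρ M) (as.map (rename ρ)) := by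
  induction as generalizing M with
  | nil => rfl
  | cons a as ih => simp only [appArgs, List.map_cons, ih, rename]

theorem rename_upr_lift (ρ : ℕ → ℕ) (M : Tm F) :
    rename (upr ρ) (lift M) = lift (rename ρ M) := by
  rw [lift, rename_rename, lift, rename_rename]
  rfl

theorem subst_ups_lift (τ : ℕ → Tm F) (M : Tm F) :
    subst (ups τ) (lift M) = lift (subst τ M) := by
  rw [lift, subst_rename, lift, rename_subst]
  rfl

theorem rename_upr2_uprsucc (ρ : ℕ → ℕ) (M : Tm F) :
    rename (upr (upr ρ)) (rename (upr Nat.succ) M) = rename (upr Nat.succ) (rename (upr ρ) M) := by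
  rw [rename_rename, rename_rename]
  congr 1
  funext n
  cases n <;> rfl

theorem subst_ups2_uprsucc (τ : ℕ → Tm F) (M : Tm F) :
    subst (ups (ups τ)) (rename (upr Nat.succ) M) = rename (upr Nat.succ) (subst (ups τ) M) := by
  rw [subst_rename, rename_subst]
  congr 1
  funext n
  cases n with
  | zero => rfl
  | succ n =>
    show lift (ups τ (n+1)) = rename (upr Nat.succ) (lift (τ n))
    rw [ups_succ, lift, lift, rename_rename, rename_rename]
    rfl

end Tm
end LamY

namespace EPCF

open LamY LamY.Tm

variable {CV Op : Type} {BV : Type} {cvTy : CV → BV} {opPar : Op → BV} {opAr : Op → ℕ}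

theorem rename_subst0_num (ρ : ℕ → ℕ) {k : ℕ} (i : ℕ) (hk : 0 < k) (M : Tm (CV ⊕ Op)) :
    rename ρ (subst0 (numStar k i) M) = subst0 (numStar k i) (rename (Tm.upr ρ) M) := by
  rw [subst0_def, subst0_def, rename_subst, subst_rename]
  congr 1
  funext n
  cases n with
  | zero => exact rename_numStar ρ i hk
  | succ n => rfl

theorem subst_subst0_num (τ : ℕ → Tm (CV ⊕ Op)) {k : ℕ} (i : ℕ) (hk : 0 < k)
    (M : Tm (CV ⊕ Op)) :
    subst τ (subst0 (numStar k i) M) = subst0 (numStar k i) (subst (ups τ) M) := by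
  rw [subst_subst0, subst_numStar τ i hk]

/-! translation commutes with renaming -/

theorem trV_ren {Γ : List (ETy BV)} {V : Val CV Op} {T : ETy BV}
    (h : VTy cvTy opPar opAr Γ V T) :
    ∀ (ρ : ℕ → ℕ), trV opAr (renV ρ V) = rename ρ (trV opAr V) := by
  refine VTy.rec
    (motive_1 := fun Γ V T _ => ∀ (ρ : ℕ → ℕ), trV opAr (renV ρ V) = rename ρ (trV opAr V))
    (motive_2 := fun Γ C T _ => ∀ (ρ : ℕ → ℕ), trC opAr (renC ρ C) = rename ρ (trC opAr C))
    ?_ ?_ ?_ ?_ ?_ ?_ ?_ ?_ ?_ ?_ h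
  · intro Γ v ρ; rfl
  · intro Γ n k hk ρ
    exact (rename_numStar ρ n (by omega)).symm
  · intro Γ n T hn ρ; rfl
  · intro Γ C T U hC ih ρ
    show Tm.lam (trC opAr (renC (EPCF.upr ρ) C)) = Tm.lam (rename (Tm.upr ρ) (trC opAr C))
    rw [ih, upr_eq]
  · intro Γ V T U hV ih ρ
    show Tm.fixY (.lam (trV opAr (renV (EPCF.upr ρ) V)))
        = Tm.fixY (.lam (rename (Tm.upr ρ) (trV opAr V)))
    rw [ih, upr_eq]
  · intro Γ V W T U hV hW ihV ihW ρ
    show Tm.lam (.app (.app (lift (trV opAr (renV ρ V))) (lift (trV opAr (renV ρ W)))) (.var 0))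
        = Tm.lam (.app (.app (rename (Tm.upr ρ) (lift (trV opAr V)))
            (rename (Tm.upr ρ) (lift (trV opAr W)))) (.var (Tm.upr ρ 0)))
    rw [ihV, ihW, rename_upr_lift, rename_upr_lift]
    rfl
  · intro Γ V T hV ih ρ
    show Tm.lam (.app (.var (Tm.upr ρ 0)) (lift (trV opAr (renV ρ V))))
        = Tm.lam (.app (.var (Tm.upr ρ 0)) (rename (Tm.upr ρ) (lift (trV opAr V))))
    rw [ih, rename_upr_lift]
  · intro Γ C B T U hC hB ihC ihB ρ
    show Tm.lam (.app (lift (trC opAr (renC ρ C)))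
          (.lam (.app (rename (Tm.upr Nat.succ) (trC opAr (renC (EPCF.upr ρ) B))) (.var 1))))
        = Tm.lam (.app (rename (Tm.upr ρ) (lift (trC opAr C)))
          (.lam (.app (rename (Tm.upr (Tm.upr ρ)) (rename (Tm.upr Nat.succ) (trC opAr B)))
            (.var (Tm.upr (Tm.upr ρ) 1)))))
    rw [ihC, ihB, upr_eq, rename_upr_lift, rename_upr2_uprsucc]
    rfl
  · intro Γ σ V C T hV hC ihV ihC ρ
    show Tm.lam (appArgs (.const (.inr σ)) (lift (trV opAr (renV ρ V)) ::
          List.ofFn (fun i : Fin (opAr σ) =>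
            .app (lift (subst0 (numStar (opAr σ) i) (trC opAr (renC (EPCF.upr ρ) C)))) (.var 0))))
        = Tm.lam (rename (Tm.upr ρ) (appArgs (.const (.inr σ)) (lift (trV opAr V) ::
          List.ofFn (fun i : Fin (opAr σ) =>
            .app (lift (subst0 (numStar (opAr σ) i) (trC opAr C))) (.var 0)))))
    rw [rename_appArgs, ihV, ihC, upr_eq]
    simp only [List.map_cons, List.map_ofFn, rename_upr_lift]
    refine congrArg Tm.lam (congrArg _ (congrArg (List.cons _)
      (congrArg List.ofFn (funext fun i => ?_))))
    have hpos : 0 < opAr σ := Nat.lt_of_le_of_lt (Nat.zero_le i.1) i.isLt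
    show Tm.app (lift (subst0 (numStar (opAr σ) i) (rename (Tm.upr ρ) (trC opAr C)))) (.var 0)
        = Tm.app (rename (Tm.upr ρ) (lift (subst0 (numStar (opAr σ) i) (trC opAr C)))) (.var 0)
    rw [← rename_subst0_num ρ i.1 hpos, rename_upr_lift]
  · intro Γ k V T Cs hV hCs ihV ihCs ρ
    show Tm.lam (appArgs (lift (trV opAr (renV ρ V)))
          (List.ofFn (fun i : Fin k => .app (lift (trC opAr (renC ρ (Cs i)))) (.var 0))))
        = Tm.lam (rename (Tm.upr ρ) (appArgs (lift (trV opAr V))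
          (List.ofFn (fun i : Fin k => .app (lift (trC opAr (Cs i))) (.var 0)))))
    rw [rename_appArgs, ihV, rename_upr_lift]
    simp only [List.map_ofFn]
    refine congrArg Tm.lam (congrArg _ (congrArg List.ofFn (funext fun i => ?_)))
    show Tm.app (lift (trC opAr (renC ρ (Cs i)))) (.var 0)
        = Tm.app (rename (Tm.upr ρ) (lift (trC opAr (Cs i)))) (.var 0)
    rw [ihCs, rename_upr_lift]

end EPCF

namespace EPCF -- reopened

open LamY LamY.Tm

variable {CV Op : Type} {BV : Type} {cvTy : CV → BV} {opPar : Op → BV} {opAr : Op → ℕ}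

def GoodSub (cvTy : CV → BV) (opPar : Op → BV) (opAr : Op → ℕ) (σ : ℕ → Val CV Op) : Prop :=
  ∀ n, ∃ Γ T, VTy cvTy opPar opAr Γ (σ n) T

theorem var_good (n : ℕ) :
    ∃ Γ T, VTy cvTy opPar opAr Γ (.var n : Val CV Op) T :=
  ⟨List.replicate (n+1) (.enum 0), .enum 0, VTy.var (by rw [List.getElem?_replicate]; simp)⟩

theorem goodSub_upsE {σ : ℕ → Val CV Op} (h : GoodSub cvTy opPar opAr σ) :
    GoodSub cvTy opPar opAr (upsE σ) := by
  intro n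
  cases n with
  | zero => exact var_good 0
  | succ n =>
    obtain ⟨Γ, T, hT⟩ := h n
    exact ⟨.enum 0 :: Γ, T, renV_ty hT (renCtx_succ _ Γ)⟩

theorem goodSub_sub0 {Γ : List (ETy BV)} {W : Val CV Op} {T : ETy BV}
    (hW : VTy cvTy opPar opAr Γ W T) :
    GoodSub cvTy opPar opAr (fun n => match n with | 0 => W | n + 1 => .var n) := by
  intro n
  cases n with
  | zero => exact ⟨Γ, T, hW⟩
  | succ n => exact var_good n

theorem trV_upsE {σ : ℕ → Val CV Op} (h : GoodSub cvTy opPar opAr σ) :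
    (fun n => trV opAr (upsE σ n)) = ups (fun n => trV opAr (σ n)) := by
  funext n
  cases n with
  | zero => rfl
  | succ n =>
    obtain ⟨Γ, T, hT⟩ := h n
    show trV opAr (renV Nat.succ (σ n)) = lift (trV opAr (σ n))
    rw [trV_ren hT]
    rfl

theorem trV_sub {Γ : List (ETy BV)} {V : Val CV Op} {T : ETy BV}
    (h : VTy cvTy opPar opAr Γ V T) :
    ∀ (σ : ℕ → Val CV Op), GoodSub cvTy opPar opAr σ →
      trV opAr (subV σ V) = subst (fun n => trV opAr (σ n)) (trV opAr V) := by
  refine VTy.rec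
    (motive_1 := fun Γ V T _ => ∀ (σ : ℕ → Val CV Op), GoodSub cvTy opPar opAr σ →
      trV opAr (subV σ V) = subst (fun n => trV opAr (σ n)) (trV opAr V))
    (motive_2 := fun Γ C T _ => ∀ (σ : ℕ → Val CV Op), GoodSub cvTy opPar opAr σ →
      trC opAr (subC σ C) = subst (fun n => trV opAr (σ n)) (trC opAr C))
    ?_ ?_ ?_ ?_ ?_ ?_ ?_ ?_ ?_ ?_ h
  · intro Γ v σ hσ; rfl
  · intro Γ n k hk σ hσ
    exact (subst_numStar _ n (by omega)).symm
  · intro Γ n T hn σ hσ; rfl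
  · intro Γ C T U hC ih σ hσ
    show Tm.lam (trC opAr (subC (upsE σ) C))
        = Tm.lam (subst (ups fun n => trV opAr (σ n)) (trC opAr C))
    rw [ih (upsE σ) (goodSub_upsE hσ), trV_upsE hσ]
  · intro Γ V T U hV ih σ hσ
    show Tm.fixY (.lam (trV opAr (subV (upsE σ) V)))
        = Tm.fixY (.lam (subst (ups fun n => trV opAr (σ n)) (trV opAr V)))
    rw [ih (upsE σ) (goodSub_upsE hσ), trV_upsE hσ]
  · intro Γ V W T U hV hW ihV ihW σ hσ
    show Tm.lam (.app (.app (lift (trV opAr (subV σ V))) (lift (trV opAr (subV σ W)))) (.var 0))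
        = Tm.lam (.app (.app (subst (ups fun n => trV opAr (σ n)) (lift (trV opAr V)))
            (subst (ups fun n => trV opAr (σ n)) (lift (trV opAr W)))) (.var 0))
    rw [ihV σ hσ, ihW σ hσ, subst_ups_lift, subst_ups_lift]
  · intro Γ V T hV ih σ hσ
    show Tm.lam (.app (.var 0) (lift (trV opAr (subV σ V))))
        = Tm.lam (.app (.var 0) (subst (ups fun n => trV opAr (σ n)) (lift (trV opAr V))))
    rw [ih σ hσ, subst_ups_lift]
  · intro Γ C B T U hC hB ihC ihB σ hσ
    show Tm.lam (.app (lift (trC opAr (subC σ C)))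
          (.lam (.app (rename (Tm.upr Nat.succ) (trC opAr (subC (upsE σ) B))) (.var 1))))
        = Tm.lam (.app (subst (ups fun n => trV opAr (σ n)) (lift (trC opAr C)))
          (.lam (.app (subst (ups (ups fun n => trV opAr (σ n))) (rename (Tm.upr Nat.succ) (trC opAr B)))
            (.var 1))))
    rw [ihC σ hσ, ihB (upsE σ) (goodSub_upsE hσ), trV_upsE hσ, subst_ups_lift,
      subst_ups2_uprsucc]
  · intro Γ σ' V C T hV hC ihV ihC σ hσ
    show Tm.lam (appArgs (.const (.inr σ')) (lift (trV opAr (subV σ V)) ::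
          List.ofFn (fun i : Fin (opAr σ') =>
            .app (lift (subst0 (numStar (opAr σ') i) (trC opAr (subC (upsE σ) C)))) (.var 0))))
        = Tm.lam (subst (ups fun n => trV opAr (σ n)) (appArgs (.const (.inr σ')) (lift (trV opAr V) ::
          List.ofFn (fun i : Fin (opAr σ') =>
            .app (lift (subst0 (numStar (opAr σ') i) (trC opAr C))) (.var 0)))))
    rw [appArgs_subst, ihV σ hσ, ihC (upsE σ) (goodSub_upsE hσ), trV_upsE hσ]
    simp only [List.map_cons, List.map_ofFn, subst_ups_lift]
    refine congrArg Tm.lam (congrArg _ (congrArg (List.cons _)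
      (congrArg List.ofFn (funext fun i => ?_))))
    have hpos : 0 < opAr σ' := Nat.lt_of_le_of_lt (Nat.zero_le i.1) i.isLt
    show Tm.app (lift (subst0 (numStar (opAr σ') i) (subst (ups fun n => trV opAr (σ n)) (trC opAr C)))) (.var 0)
        = Tm.app (subst (ups fun n => trV opAr (σ n)) (lift (subst0 (numStar (opAr σ') i) (trC opAr C)))) (.var 0)
    rw [subst_ups_lift, ← subst_subst0_num _ i.1 hpos]
  · intro Γ k V T Cs hV hCs ihV ihCs σ hσ
    show Tm.lam (appArgs (lift (trV opAr (subV σ V)))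
          (List.ofFn (fun i : Fin k => .app (lift (trC opAr (subC σ (Cs i)))) (.var 0))))
        = Tm.lam (subst (ups fun n => trV opAr (σ n)) (appArgs (lift (trV opAr V))
          (List.ofFn (fun i : Fin k => .app (lift (trC opAr (Cs i))) (.var 0)))))
    rw [appArgs_subst, ihV σ hσ, subst_ups_lift]
    simp only [List.map_ofFn]
    refine congrArg Tm.lam (congrArg _ (congrArg List.ofFn (funext fun i => ?_)))
    show Tm.app (lift (trC opAr (subC σ (Cs i)))) (.var 0)
        = Tm.app (subst (ups fun n => trV opAr (σ n)) (lift (trC opAr (Cs i)))) (.var 0)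
    rw [ihCs i σ hσ, subst_ups_lift]

theorem trC_sub {Γ : List (ETy BV)} {C : Comp CV Op} {T : ETy BV}
    (h : CTy cvTy opPar opAr Γ C T) :
    ∀ (σ : ℕ → Val CV Op), GoodSub cvTy opPar opAr σ →
      trC opAr (subC σ C) = subst (fun n => trV opAr (σ n)) (trC opAr C) := by
  refine CTy.rec
    (motive_1 := fun Γ V T _ => ∀ (σ : ℕ → Val CV Op), GoodSub cvTy opPar opAr σ →
      trV opAr (subV σ V) = subst (fun n => trV opAr (σ n)) (trV opAr V))
    (motive_2 := fun Γ C T _ => ∀ (σ : ℕ → Val CV Op), GoodSub cvTy opPar opAr σ →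
      trC opAr (subC σ C) = subst (fun n => trV opAr (σ n)) (trC opAr C))
    ?_ ?_ ?_ ?_ ?_ ?_ ?_ ?_ ?_ ?_ h
  · intro Γ v σ hσ; rfl
  · intro Γ n k hk σ hσ
    exact (subst_numStar _ n (by omega)).symm
  · intro Γ n T hn σ hσ; rfl
  · intro Γ C T U hC ih σ hσ
    show Tm.lam (trC opAr (subC (upsE σ) C))
        = Tm.lam (subst (ups fun n => trV opAr (σ n)) (trC opAr C))
    rw [ih (upsE σ) (goodSub_upsE hσ), trV_upsE hσ]
  · intro Γ V T U hV ih σ hσ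
    show Tm.fixY (.lam (trV opAr (subV (upsE σ) V)))
        = Tm.fixY (.lam (subst (ups fun n => trV opAr (σ n)) (trV opAr V)))
    rw [ih (upsE σ) (goodSub_upsE hσ), trV_upsE hσ]
  · intro Γ V W T U hV hW ihV ihW σ hσ
    show Tm.lam (.app (.app (lift (trV opAr (subV σ V))) (lift (trV opAr (subV σ W)))) (.var 0))
        = Tm.lam (.app (.app (subst (ups fun n => trV opAr (σ n)) (lift (trV opAr V)))
            (subst (ups fun n => trV opAr (σ n)) (lift (trV opAr W)))) (.var 0))
    rw [ihV σ hσ, ihW σ hσ, subst_ups_lift, subst_ups_lift]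
  · intro Γ V T hV ih σ hσ
    show Tm.lam (.app (.var 0) (lift (trV opAr (subV σ V))))
        = Tm.lam (.app (.var 0) (subst (ups fun n => trV opAr (σ n)) (lift (trV opAr V))))
    rw [ih σ hσ, subst_ups_lift]
  · intro Γ C B T U hC hB ihC ihB σ hσ
    show Tm.lam (.app (lift (trC opAr (subC σ C)))
          (.lam (.app (rename (Tm.upr Nat.succ) (trC opAr (subC (upsE σ) B))) (.var 1))))
        = Tm.lam (.app (subst (ups fun n => trV opAr (σ n)) (lift (trC opAr C)))
          (.lam (.app (subst (ups (ups fun n => trV opAr (σ n))) (rename (Tm.upr Nat.succ) (trC opAr B)))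
            (.var 1))))
    rw [ihC σ hσ, ihB (upsE σ) (goodSub_upsE hσ), trV_upsE hσ, subst_ups_lift,
      subst_ups2_uprsucc]
  · intro Γ σ' V C T hV hC ihV ihC σ hσ
    show Tm.lam (appArgs (.const (.inr σ')) (lift (trV opAr (subV σ V)) ::
          List.ofFn (fun i : Fin (opAr σ') =>
            .app (lift (subst0 (numStar (opAr σ') i) (trC opAr (subC (upsE σ) C)))) (.var 0))))
        = Tm.lam (subst (ups fun n => trV opAr (σ n)) (appArgs (.const (.inr σ')) (lift (trV opAr V) ::
          List.ofFn (fun i : Fin (opAr σ') =>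
            .app (lift (subst0 (numStar (opAr σ') i) (trC opAr C))) (.var 0)))))
    rw [appArgs_subst, ihV σ hσ, ihC (upsE σ) (goodSub_upsE hσ), trV_upsE hσ]
    simp only [List.map_cons, List.map_ofFn, subst_ups_lift]
    refine congrArg Tm.lam (congrArg _ (congrArg (List.cons _)
      (congrArg List.ofFn (funext fun i => ?_))))
    have hpos : 0 < opAr σ' := Nat.lt_of_le_of_lt (Nat.zero_le i.1) i.isLt
    show Tm.app (lift (subst0 (numStar (opAr σ') i) (subst (ups fun n => trV opAr (σ n)) (trC opAr C)))) (.var 0)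
        = Tm.app (subst (ups fun n => trV opAr (σ n)) (lift (subst0 (numStar (opAr σ') i) (trC opAr C)))) (.var 0)
    rw [subst_ups_lift, ← subst_subst0_num _ i.1 hpos]
  · intro Γ k V T Cs hV hCs ihV ihCs σ hσ
    show Tm.lam (appArgs (lift (trV opAr (subV σ V)))
          (List.ofFn (fun i : Fin k => .app (lift (trC opAr (subC σ (Cs i)))) (.var 0))))
        = Tm.lam (subst (ups fun n => trV opAr (σ n)) (appArgs (lift (trV opAr V))
          (List.ofFn (fun i : Fin k => .app (lift (trC opAr (Cs i))) (.var 0)))))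
    rw [appArgs_subst, ihV σ hσ, subst_ups_lift]
    simp only [List.map_ofFn]
    refine congrArg Tm.lam (congrArg _ (congrArg List.ofFn (funext fun i => ?_)))
    show Tm.app (lift (trC opAr (subC σ (Cs i)))) (.var 0)
        = Tm.app (subst (ups fun n => trV opAr (σ n)) (lift (trC opAr (Cs i)))) (.var 0)
    rw [ihCs i σ hσ, subst_ups_lift]

theorem tr_sub0_fun {W : Val CV Op} :
    (fun n => trV opAr ((fun n => match n with | 0 => W | n + 1 => .var n) n))
      = (fun n => match n with | 0 => trV opAr W | n + 1 => (.var n : Tm (CV ⊕ Op))) := by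
  funext n; cases n <;> rfl

theorem trC_subst0C {Γ Δ : List (ETy BV)} {C : Comp CV Op} {W : Val CV Op} {T U : ETy BV}
    (hC : CTy cvTy opPar opAr Γ C U) (hW : VTy cvTy opPar opAr Δ W T) :
    trC opAr (subst0C W C) = subst0 (trV opAr W) (trC opAr C) := by
  refine (trC_sub hC _ (goodSub_sub0 hW)).trans ?_
  show _ = subst _ _
  congr 1
  funext n; cases n <;> rfl

theorem trV_subst0V {Γ Δ : List (ETy BV)} {V W : Val CV Op} {T U : ETy BV}
    (hV : VTy cvTy opPar opAr Γ V U) (hW : VTy cvTy opPar opAr Δ W T) :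
    trV opAr (subst0V W V) = subst0 (trV opAr W) (trV opAr V) := by
  refine (trV_sub hV _ (goodSub_sub0 hW)).trans ?_
  show _ = subst _ _
  congr 1
  funext n; cases n <;> rfl

end EPCF

namespace LamY
namespace Tm

variable {F : Type}

theorem subst0_app (N A B : Tm F) : subst0 N (.app A B) = .app (subst0 N A) (subst0 N B) := rfl
theorem subst0_var0 (N : Tm F) : subst0 N (.var 0) = N := rfl
theorem subst0_const (N : Tm F) (f : F) : subst0 N (.const f) = .const f := rfl

theorem subst0_appArgs (N : Tm F) (as : List (Tm F)) (M : Tm F) :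
    subst0 N (appArgs M as) = appArgs (subst0 N M) (as.map (subst0 N)) :=
  appArgs_subst _ as M

end Tm
end LamY

namespace EPCF

open LamY LamY.Tm

variable {CV Op : Type} (opAr : Op → ℕ)

theorem red_app (V W : Val CV Op) (d : Tm (CV ⊕ Op)) :
    Step (.app (trC opAr (.app V W)) d) (.app (.app (trV opAr V) (trV opAr W)) d) := by
  have h := Step.beta (.app (.app (lift (trV opAr V)) (lift (trV opAr W))) (.var 0)) d
  have e : subst0 d (.app (.app (lift (trV opAr V)) (lift (trV opAr W))) (.var 0))
      = .app (.app (trV opAr V) (trV opAr W)) d := by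
    rw [subst0_app, subst0_app, subst0_lift, subst0_lift, subst0_var0]
  rw [e] at h
  exact h

theorem red_ret (V : Val CV Op) (d : Tm (CV ⊕ Op)) :
    Step (.app (trC opAr (.ret V)) d) (.app d (trV opAr V)) := by
  have h := Step.beta (.app (.var 0) (lift (trV opAr V))) d
  have e : subst0 d (.app (.var 0) (lift (trV opAr V))) = .app d (trV opAr V) := by
    rw [subst0_app, subst0_lift, subst0_var0]
  rw [e] at h
  exact h

theorem red_letin (C B : Comp CV Op) (d : Tm (CV ⊕ Op)) :
    Step (.app (trC opAr (.letin C B)) d)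
      (.app (trC opAr C) (.lam (.app (trC opAr B) (lift d)))) := by
  have h := Step.beta
    (.app (lift (trC opAr C)) (.lam (.app (rename (Tm.upr Nat.succ) (trC opAr B)) (.var 1)))) d
  have e : subst0 d (.app (lift (trC opAr C))
        (.lam (.app (rename (Tm.upr Nat.succ) (trC opAr B)) (.var 1))))
      = .app (trC opAr C) (.lam (.app (trC opAr B) (lift d))) := by
    rw [subst0_app, subst0_lift]
    show Tm.app (trC opAr C) (.lam (.app
        (subst (ups fun n => match n with | 0 => d | n + 1 => .var n)
          (rename (Tm.upr Nat.succ) (trC opAr B)))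
        (subst (ups fun n => match n with | 0 => d | n + 1 => .var n) (.var 1)))) = _
    rw [subst_rename]
    rw [show (fun n => (ups fun n => match n with | 0 => d | n + 1 => (.var n : Tm (CV ⊕ Op)))
        (Tm.upr Nat.succ n)) = (fun n => (.var n : Tm (CV ⊕ Op))) from
      funext fun n => by cases n <;> rfl]
    rw [subst_var]
    rfl
  rw [e] at h
  exact h

theorem red_opc (σ : Op) (V : Val CV Op) (C : Comp CV Op) (d : Tm (CV ⊕ Op)) :
    Step (.app (trC opAr (.opc σ V C)) d)
      (appArgs (.const (.inr σ)) (trV opAr V ::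
        List.ofFn (fun i : Fin (opAr σ) =>
          .app (subst0 (numStar (opAr σ) i) (trC opAr C)) d))) := by
  have h := Step.beta (appArgs (.const (.inr σ)) (lift (trV opAr V) ::
    List.ofFn (fun i : Fin (opAr σ) =>
      .app (lift (subst0 (numStar (opAr σ) i) (trC opAr C))) (.var 0)))) d
  have e : subst0 d (appArgs (.const (.inr σ)) (lift (trV opAr V) ::
        List.ofFn (fun i : Fin (opAr σ) =>
          .app (lift (subst0 (numStar (opAr σ) i) (trC opAr C))) (.var 0))))
      = appArgs (.const (.inr σ)) (trV opAr V ::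
        List.ofFn (fun i : Fin (opAr σ) =>
          .app (subst0 (numStar (opAr σ) i) (trC opAr C)) d)) := by
    rw [subst0_appArgs]
    simp only [List.map_cons, List.map_ofFn, subst0_lift, subst0_const]
    refine congrArg _ (congrArg (List.cons _) (congrArg List.ofFn (funext fun i => ?_)))
    show subst0 d (.app (lift (subst0 (numStar (opAr σ) i) (trC opAr C))) (.var 0)) = _
    rw [subst0_app, subst0_lift, subst0_var0]
  rw [e] at h
  exact h

theorem red_case (k : ℕ) (V : Val CV Op) (Cs : Fin k → Comp CV Op) (d : Tm (CV ⊕ Op)) :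
    Step (.app (trC opAr (.case k V Cs)) d)
      (appArgs (trV opAr V) (List.ofFn (fun i : Fin k => .app (trC opAr (Cs i)) d))) := by
  have h := Step.beta (appArgs (lift (trV opAr V))
    (List.ofFn (fun i : Fin k => .app (lift (trC opAr (Cs i))) (.var 0)))) d
  have e : subst0 d (appArgs (lift (trV opAr V))
        (List.ofFn (fun i : Fin k => .app (lift (trC opAr (Cs i))) (.var 0))))
      = appArgs (trV opAr V) (List.ofFn (fun i : Fin k => .app (trC opAr (Cs i)) d)) := by
    rw [subst0_appArgs, subst0_lift]
    simp only [List.map_ofFn]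
    refine congrArg _ (congrArg List.ofFn (funext fun i => ?_))
    show subst0 d (.app (lift (trC opAr (Cs i))) (.var 0)) = _
    rw [subst0_app, subst0_lift, subst0_var0]
  rw [e] at h
  exact h

end EPCF

namespace EPCF

open LamY LamY.Tm Relation

variable {CV Op : Type} {BV : Type} {cvTy : CV → BV} {opPar : Op → BV} {opAr : Op → ℕ}

theorem subC_upsE_renC (σ : ℕ → Val CV Op) (hσ : ∀ n, σ (n+1) = .var n) (D : Comp CV Op) :
    subC (upsE σ) (renC (EPCF.upr Nat.succ) D) = D := by
  rw [subC_renC]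
  rw [show (fun n => upsE σ (EPCF.upr Nat.succ n)) = (fun n => (.var n : Val CV Op)) from
    funext fun n => by
      cases n with
      | zero => rfl
      | succ n =>
        show renV Nat.succ (σ (n+1)) = _
        rw [hσ]
        rfl]
  exact subC_id D

theorem subst0C_letin (W : Val CV Op) (C₁ D : Comp CV Op) :
    subst0C W (.letin C₁ (renC (EPCF.upr Nat.succ) D)) = .letin (subst0C W C₁) D := by
  show Comp.letin _ (subC (upsE _) (renC (EPCF.upr Nat.succ) D)) = _
  rw [subC_upsE_renC _ (fun n => rfl) D]
  rfl

theorem bt_estep {C D : Comp CV Op} (hs : EStep C D) :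
    ∀ {T : ETy BV}, CTy cvTy opPar opAr [] C T →
      ∀ (d : Tm (CV ⊕ Op)) (p : List ℕ) (l : Option (CV ⊕ Op)),
      (BTAt (arF opAr) (.app (trC opAr C) d) p l ↔
        BTAt (arF opAr) (.app (trC opAr D) d) p l) := by
  induction hs with
  | beta C₀ W =>
    intro T hC d p l
    cases hC with | app hV hW =>
    cases hV with | lam hC₀ =>
    have s1 := red_app opAr (.lam C₀) W d
    have s2 : Step (.app (.app (trV opAr (.lam C₀)) (trV opAr W)) d)
        (.app (trC opAr (subst0C W C₀)) d) := by
      have h := Step.appL d (Step.beta (trC opAr C₀) (trV opAr W))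
      rw [trC_subst0C hC₀ hW]
      exact h
    exact (bt_step s1 p l).trans (bt_step s2 p l)
  | fix V W =>
    intro T hC d p l
    cases hC with | app hV hW =>
    cases hV with | fixv hV' =>
    have s1 := red_app opAr (.fixv V) W d
    have s2 : Step (.app (.app (trV opAr (.fixv V)) (trV opAr W)) d)
        (.app (.app (.app (.lam (trV opAr V)) (.fixY (.lam (trV opAr V)))) (trV opAr W)) d) :=
      Step.appL d (Step.appL _ (Step.fix (.lam (trV opAr V))))
    have s3 : Step (.app (.app (.app (.lam (trV opAr V)) (.fixY (.lam (trV opAr V)))) (trV opAr W)) d)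
        (.app (.app (trV opAr (subst0V (.fixv V) V)) (trV opAr W)) d) := by
      have h := Step.appL d (Step.appL (trV opAr W)
        (Step.beta (trV opAr V) (.fixY (.lam (trV opAr V)))))
      rw [trV_subst0V hV' (VTy.fixv hV')]
      exact h
    have s4 := red_app opAr (subst0V (.fixv V) V) W d
    exact ((bt_step s1 p l).trans ((bt_step s2 p l).trans (bt_step s3 p l))).trans
      (bt_step s4 p l).symm
  | @case n k hlt Cs =>
    intro T hC d p l
    have s1 := red_case opAr k (.num n k) Cs d
    obtain ⟨m, hm⟩ := red_lamN_proj k n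
      (List.ofFn fun i : Fin k => Tm.app (trC opAr (Cs i)) d)
      (.app (trC opAr (Cs ⟨n, hlt⟩)) d) hlt (by simp)
      (by simp [List.getElem?_ofFn, List.ofFnNthVal, hlt])
    have hrtg : ReflTransGen Step
        (appArgs (trV opAr (.num n k)) (List.ofFn fun i : Fin k => Tm.app (trC opAr (Cs i)) d))
        (.app (trC opAr (Cs ⟨n, hlt⟩)) d) := by
      show ReflTransGen Step (appArgs (numStar k n) _) _
      rw [numStar_eq]
      exact nsteps_rtg hm
    exact (bt_step s1 p l).trans (bt_rtg hrtg p l)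
  | letRet V B =>
    intro T hC d p l
    cases hC with | letin hC₁ hB =>
    cases hC₁ with | ret hV =>
    have s1 := red_letin opAr (.ret V) B d
    have s2 := red_ret opAr V (Tm.lam (.app (trC opAr B) (lift d)))
    have s3 : Step (.app (.lam (.app (trC opAr B) (lift d))) (trV opAr V))
        (.app (trC opAr (subst0C V B)) d) := by
      have h := Step.beta (.app (trC opAr B) (lift d)) (trV opAr V)
      have e : subst0 (trV opAr V) (.app (trC opAr B) (lift d))
          = .app (subst0 (trV opAr V) (trC opAr B)) d := by
        rw [subst0_app, subst0_lift]
      rw [e] at h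
      rw [trC_subst0C hB hV]
      exact h
    exact (bt_step s1 p l).trans ((bt_step s2 p l).trans (bt_step s3 p l))
  | @letCong C₁ C₁' B hstep ih =>
    intro T hC d p l
    cases hC with | letin hC₁ hB =>
    have s1 := red_letin opAr C₁ B d
    have s2 := red_letin opAr C₁' B d
    exact (bt_step s1 p l).trans
      ((ih hC₁ (.lam (.app (trC opAr B) (lift d))) p l).trans (bt_step s2 p l).symm)
  | letOp σ V C₁ D₀ =>
    intro T hC d p l
    have hD : CTy cvTy opPar opAr []
        (.opc σ V (.letin C₁ (renC (EPCF.upr Nat.succ) D₀))) T :=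
      preservation (EStep.letOp σ V C₁ D₀) hC
    cases hC with | letin hC₁ hB =>
    cases hC₁ with | opc hV hC₁' =>
    have hLet : CTy cvTy opPar opAr [ETy.enum (opAr σ)]
        (.letin C₁ (renC (EPCF.upr Nat.succ) D₀)) T := by
      cases hD with | opc _ h => exact h
    have s1 := red_letin opAr (.opc σ V C₁) D₀ d
    have s2 := red_opc opAr σ V C₁ (Tm.lam (.app (trC opAr D₀) (lift d)))
    have s3 := red_opc opAr σ V (.letin C₁ (renC (EPCF.upr Nat.succ) D₀)) d
    refine ((bt_step s1 p l).trans (bt_step s2 p l)).trans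
      (Iff.trans ?_ (bt_step s3 p l).symm)
    have hlen1 : ((trV opAr V :: List.ofFn fun i : Fin (opAr σ) =>
        Tm.app (subst0 (numStar (opAr σ) i) (trC opAr C₁))
          (Tm.lam (.app (trC opAr D₀) (lift d)))) : List (Tm (CV ⊕ Op))).length
        = arF (CV := CV) opAr (.inr σ) := by
      simp [arF]
    have hlen2 : ((trV opAr V :: List.ofFn fun i : Fin (opAr σ) =>
        Tm.app (subst0 (numStar (opAr σ) i)
          (trC opAr (.letin C₁ (renC (EPCF.upr Nat.succ) D₀)))) d) : List (Tm (CV ⊕ Op))).length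
        = arF (CV := CV) opAr (.inr σ) := by
      simp [arF]
    cases p with
    | nil => rw [btat_head hlen1, btat_head hlen2]
    | cons i p' =>
      rw [btat_child hlen1 i p' l, btat_child hlen2 i p' l]
      cases i with
      | zero => simp only [List.getElem?_cons_zero]
      | succ j =>
        simp only [List.getElem?_cons_succ, List.getElem?_ofFn, List.ofFnNthVal]
        by_cases hj : j < opAr σ
        · simp only [dif_pos hj, Option.some.injEq, exists_eq_left']
          have hnum : VTy cvTy opPar opAr [] (.num j (opAr σ) : Val CV Op) (.enum (opAr σ)) :=
            VTy.num hj
          have e1 : subst0 (numStar (opAr σ) j) (trC opAr C₁)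
              = trC opAr (subst0C (.num j (opAr σ)) C₁) :=
            (trC_subst0C hC₁' hnum).symm
          have e2 : subst0 (numStar (opAr σ) j)
                (trC opAr (.letin C₁ (renC (EPCF.upr Nat.succ) D₀)))
              = trC opAr (.letin (subst0C (.num j (opAr σ)) C₁) D₀) := by
            rw [show subst0 (numStar (opAr σ) j)
                (trC opAr (.letin C₁ (renC (EPCF.upr Nat.succ) D₀)))
                = trC opAr (subst0C (.num j (opAr σ)) (.letin C₁ (renC (EPCF.upr Nat.succ) D₀)))
              from (trC_subst0C hLet hnum).symm]
            rw [subst0C_letin]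
          have e1' : subst0 (numStar (opAr σ) (↑(⟨j, hj⟩ : Fin (opAr σ)))) (trC opAr C₁)
              = trC opAr (subst0C (.num j (opAr σ)) C₁) := e1
          have e2' : subst0 (numStar (opAr σ) (↑(⟨j, hj⟩ : Fin (opAr σ))))
                (trC opAr (.letin C₁ (renC (EPCF.upr Nat.succ) D₀)))
              = trC opAr (.letin (subst0C (.num j (opAr σ)) C₁) D₀) := e2
          rw [e1', e2']
          exact (bt_step (red_letin opAr (subst0C (.num j (opAr σ)) C₁) D₀ d) p' l).symm
        · simp [dif_neg hj]

theorem simD {C D : Comp CV Op} (hs : EStep C D) :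
    ∀ {T : ETy BV}, CTy cvTy opPar opAr [] C T → ∀ (d : Tm (CV ⊕ Op)),
      (∃ X m n, NSteps (.app (trC opAr C) d) m X ∧ NSteps (.app (trC opAr D) d) n X ∧ n < m)
      ∨ (∃ σ' W C'', ReflTransGen EStep D (.opc σ' W C'')) := by
  induction hs with
  | beta C₀ W =>
    intro T hC d
    cases hC with | app hV hW =>
    cases hV with | lam hC₀ =>
    left
    refine ⟨.app (trC opAr (subst0C W C₀)) d, 2, 0, ?_, NSteps.refl _, by omega⟩
    refine NSteps.head (red_app opAr (.lam C₀) W d) (NSteps.head ?_ (NSteps.refl _))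
    have h := Step.appL d (Step.beta (trC opAr C₀) (trV opAr W))
    rw [trC_subst0C hC₀ hW]
    exact h
  | fix V W =>
    intro T hC d
    cases hC with | app hV hW =>
    cases hV with | fixv hV' =>
    left
    refine ⟨.app (.app (trV opAr (subst0V (.fixv V) V)) (trV opAr W)) d, 3, 1,
      ?_, NSteps.head (red_app opAr (subst0V (.fixv V) V) W d) (NSteps.refl _), by omega⟩
    refine NSteps.head (red_app opAr (.fixv V) W d)
      (NSteps.head (Step.appL d (Step.appL _ (Step.fix (.lam (trV opAr V)))))
        (NSteps.head ?_ (NSteps.refl _)))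
    have h := Step.appL d (Step.appL (trV opAr W)
      (Step.beta (trV opAr V) (.fixY (.lam (trV opAr V)))))
    rw [trV_subst0V hV' (VTy.fixv hV')]
    exact h
  | @case n k hlt Cs =>
    intro T hC d
    left
    obtain ⟨m, hm⟩ := red_lamN_proj k n
      (List.ofFn fun i : Fin k => Tm.app (trC opAr (Cs i)) d)
      (.app (trC opAr (Cs ⟨n, hlt⟩)) d) hlt (by simp)
      (by simp [List.getElem?_ofFn, List.ofFnNthVal, hlt])
    refine ⟨.app (trC opAr (Cs ⟨n, hlt⟩)) d, m + 1, 0,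
      NSteps.head (red_case opAr k (.num n k) Cs d) ?_, NSteps.refl _, by omega⟩
    show NSteps (appArgs (numStar k n) _) m _
    rw [numStar_eq]
    exact hm
  | letRet V B =>
    intro T hC d
    cases hC with | letin hC₁ hB =>
    cases hC₁ with | ret hV =>
    left
    refine ⟨.app (trC opAr (subst0C V B)) d, 3, 0,
      NSteps.head (red_letin opAr (.ret V) B d)
        (NSteps.head (red_ret opAr V (Tm.lam (.app (trC opAr B) (lift d))))
          (NSteps.head ?_ (NSteps.refl _))), NSteps.refl _, by omega⟩
    have h := Step.beta (.app (trC opAr B) (lift d)) (trV opAr V)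
    have e : subst0 (trV opAr V) (.app (trC opAr B) (lift d))
        = .app (subst0 (trV opAr V) (trC opAr B)) d := by
      rw [subst0_app, subst0_lift]
    rw [e] at h
    rw [trC_subst0C hB hV]
    exact h
  | @letCong C₁ C₁' B hstep ih =>
    intro T hC d
    cases hC with | letin hC₁ hB =>
    rcases ih hC₁ (.lam (.app (trC opAr B) (lift d))) with ⟨X, m, n', h1, h2, hlt⟩ | ⟨σ', W, C'', hop⟩
    · left
      exact ⟨X, m + 1, n' + 1, NSteps.head (red_letin opAr C₁ B d) h1,
        NSteps.head (red_letin opAr C₁' B d) h2, by omega⟩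
    · right
      exact ⟨σ', W, _, ReflTransGen.tail (ertg_letin hop) (EStep.letOp σ' W C'' B)⟩
  | letOp σ V C₁ D₀ =>
    intro T hC d
    right
    exact ⟨σ, V, _, ReflTransGen.refl⟩

theorem div_aux (c : Tm (CV ⊕ Op)) :
    ∀ n : ℕ, ∀ {C : Comp CV Op} {T : ETy BV} {N : Tm (CV ⊕ Op)},
      CTy cvTy opPar opAr [] C T → CDiverges C → NSteps (.app (trC opAr C) c) n N →
      ∃ N', Step N N' := by
  intro n
  induction n using Nat.strong_induction_on with
  | _ n ih =>
    intro C T N hC hd hN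
    by_cases hex : ∃ N', Step N N'
    · exact hex
    · obtain ⟨D, hD⟩ := hd C ReflTransGen.refl
      have hDty := preservation hD hC
      have hDdiv := cdiverges_step hD hd
      rcases simD hD hC c with ⟨X, m, n', h1, h2, hlt⟩ | ⟨σ', W, C'', hop⟩
      · have hnorm : ∀ K, ¬ Step N K := fun K hK => hex ⟨K, hK⟩
        obtain ⟨hle, h3⟩ := nsteps_det_prefix h1 hN hnorm
        exact ih (n' + (n - m)) (by omega) hDty hDdiv (h2.trans h3)
      · exact absurd (hd _ (ReflTransGen.head hD hop))
          (by rintro ⟨E, hE⟩; exact nostep_opc hE)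

theorem diverges_trC {C : Comp CV Op} {T : ETy BV} (hC : CTy cvTy opPar opAr [] C T)
    (hd : CDiverges C) (c : Tm (CV ⊕ Op)) : Diverges (.app (trC opAr C) c) := by
  intro N hN
  obtain ⟨n, hn⟩ := rtg_nsteps hN
  exact div_aux c n hC hd hn

theorem bt_ertg : ∀ {C D : Comp CV Op}, ReflTransGen EStep C D →
    ∀ {T : ETy BV}, CTy cvTy opPar opAr [] C T →
    ∀ (d : Tm (CV ⊕ Op)) (p : List ℕ) (l : Option (CV ⊕ Op)),
      (BTAt (arF opAr) (.app (trC opAr C) d) p l ↔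
        BTAt (arF opAr) (.app (trC opAr D) d) p l) := by
  intro C D h
  induction h using ReflTransGen.head_induction_on with
  | refl => intro T hC d p l; exact Iff.rfl
  | head hs h' ih =>
    intro T hC d p l
    exact (bt_estep hs hC d p l).trans (ih (preservation hs hC) d p l)

end EPCF

namespace EPCF

open LamY LamY.Tm Relation

variable {CV Op : Type} {BV : Type} {cvTy : CV → BV} {opPar : Op → BV} {opAr : Op → ℕ}

theorem tri {C : Comp CV Op} {T : ETy BV} (hC : CTy cvTy opPar opAr [] C T) :
    CDiverges C ∨ (∃ V, ReflTransGen EStep C (.ret V)) ∨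
      (∃ σ V C', ReflTransGen EStep C (.opc σ V C')) := by
  by_cases h : CDiverges C
  · exact Or.inl h
  · unfold CDiverges at h
    push_neg at h
    obtain ⟨D, hD, hn⟩ := h
    have hDty := preservation_rtg hD hC
    rcases progress D T hDty with ⟨V, rfl⟩ | ⟨σ, V, C', rfl⟩ | hE
    · exact Or.inr (Or.inl ⟨V, hD⟩)
    · exact Or.inr (Or.inr ⟨σ, V, C', hD⟩)
    · obtain ⟨E, hE'⟩ := hE
      exact absurd hE' (hn E)

theorem bt_div {C : Comp CV Op} {T : ETy BV} (hC : CTy cvTy opPar opAr [] C T)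
    (hd : CDiverges C) (c : Tm (CV ⊕ Op)) (p : List ℕ) (l : Option (CV ⊕ Op)) :
    BTAt (arF opAr) (.app (trC opAr C) c) p l ↔ (p = [] ∧ l = none) := by
  have hd' := diverges_trC hC hd c
  constructor
  · intro hb
    cases hb with
    | bot _ => exact ⟨rfl, rfl⟩
    | node hr _ => exact (diverges_nostep hd' hr (fun K => nostep_const _ _)).elim
    | child hr _ _ _ => exact (diverges_nostep hd' hr (fun K => nostep_const _ _)).elim
  · rintro ⟨rfl, rfl⟩
    exact BTAt.bot hd'

theorem mixed_div {C : Comp CV Op} (c : Tm (CV ⊕ Op)) (hd : CDiverges C)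
    (p : List ℕ) (l : Option (CV ⊕ Op)) :
    Mixed opAr c C p l ↔ (p = [] ∧ l = none) := by
  constructor
  · intro hm
    cases hm with
    | bot _ => exact ⟨rfl, rfl⟩
    | ret hr _ => exact (cdiverges_nostep hd hr (fun K => nostep_ret)).elim
    | opHead hr => exact (cdiverges_nostep hd hr (fun K => nostep_opc)).elim
    | opParam hr => exact (cdiverges_nostep hd hr (fun K => nostep_opc)).elim
    | opChild hr _ _ => exact (cdiverges_nostep hd hr (fun K => nostep_opc)).elim
  · rintro ⟨rfl, rfl⟩
    exact Mixed.bot hd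

theorem mixed_ret {C : Comp CV Op} {V : Val CV Op} (c : Tm (CV ⊕ Op))
    (hr : ReflTransGen EStep C (.ret V)) (p : List ℕ) (l : Option (CV ⊕ Op)) :
    Mixed opAr c C p l ↔ BTAt (arF opAr) (.app c (trV opAr V)) p l := by
  constructor
  · intro hm
    cases hm with
    | bot hd => exact (cdiverges_nostep hd hr (fun K => nostep_ret)).elim
    | ret hr' hb =>
      have heq := ertg_normal_unique hr (fun K => nostep_ret) hr' (fun K => nostep_ret)
      injection heq with h
      subst h
      exact hb
    | opHead hr' =>
      exact absurd (ertg_normal_unique hr (fun K => nostep_ret) hr' (fun K => nostep_opc))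
        (by simp)
    | opParam hr' =>
      exact absurd (ertg_normal_unique hr (fun K => nostep_ret) hr' (fun K => nostep_opc))
        (by simp)
    | opChild hr' _ _ =>
      exact absurd (ertg_normal_unique hr (fun K => nostep_ret) hr' (fun K => nostep_opc))
        (by simp)
  · exact Mixed.ret hr

theorem btat_cv (v : CV) (p : List ℕ) (l : Option (CV ⊕ Op)) :
    BTAt (arF opAr) (trV opAr (.cv v : Val CV Op)) p l ↔ (p = [] ∧ l = some (.inl v)) := by
  cases p with
  | nil =>
    have h := btat_head (ar := arF opAr) (f := (Sum.inl v : CV ⊕ Op)) (args := []) rfl l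
    constructor
    · intro hb
      exact ⟨rfl, h.mp hb⟩
    · rintro ⟨-, rfl⟩
      exact h.mpr rfl
  | cons i p' =>
    have h := btat_child (ar := arF opAr) (f := (Sum.inl v : CV ⊕ Op)) (args := []) rfl i p' l
    constructor
    · intro hb
      obtain ⟨Mi, hMi, -⟩ := h.mp hb
      simp at hMi
    · rintro ⟨h', -⟩
      cases h'

theorem main_aux (c : Tm (CV ⊕ Op)) :
    ∀ (p : List ℕ) {C : Comp CV Op} {T : ETy BV}, CTy cvTy opPar opAr [] C T →
      ∀ (l : Option (CV ⊕ Op)),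
      (BTAt (arF opAr) (Tm.app (trC opAr C) c) p l ↔ Mixed opAr c C p l) := by
  intro p
  induction p with
  | nil =>
    intro C T hC l
    rcases tri hC with hd | ⟨V, hr⟩ | ⟨σ, V, C', hr⟩
    · exact (bt_div hC hd c [] l).trans (mixed_div c hd [] l).symm
    · exact ((bt_ertg hr hC c [] l).trans (bt_step (red_ret opAr V c) [] l)).trans
        (mixed_ret c hr [] l).symm
    · -- op case at the root
      have hopty := preservation_rtg hr hC
      have hnopc : ∀ K, ¬ EStep (Comp.opc σ V C') K := fun K => nostep_opc
      have hlen : ((trV opAr V :: List.ofFn fun i : Fin (opAr σ) =>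
          Tm.app (subst0 (numStar (opAr σ) i) (trC opAr C')) c) : List (Tm (CV ⊕ Op))).length
          = arF (CV := CV) opAr (.inr σ) := by simp [arF]
      refine ((bt_ertg hr hC c [] l).trans (bt_step (red_opc opAr σ V C' c) [] l)).trans
        ((btat_head hlen l).trans ?_)
      constructor
      · rintro rfl
        exact Mixed.opHead hr
      · intro hm
        cases hm with
        | bot hd => exact (cdiverges_nostep hd hr hnopc).elim
        | ret hr' _ =>
          exact absurd (ertg_normal_unique hr hnopc hr' (fun K => nostep_ret)) (by simp)
        | opHead hr' =>
          have heq := ertg_normal_unique hr hnopc hr' (fun K => nostep_opc)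
          injection heq with h1 h2 h3
          subst h1
          rfl
  | cons i p' ih =>
    intro C T hC l
    rcases tri hC with hd | ⟨V, hr⟩ | ⟨σ, V, C', hr⟩
    · exact (bt_div hC hd c (i :: p') l).trans (mixed_div c hd (i :: p') l).symm
    · exact ((bt_ertg hr hC c (i :: p') l).trans (bt_step (red_ret opAr V c) (i :: p') l)).trans
        (mixed_ret c hr (i :: p') l).symm
    · have hopty := preservation_rtg hr hC
      have hnopc : ∀ K, ¬ EStep (Comp.opc σ V C') K := fun K => nostep_opc
      cases hopty with | opc hV hC' =>
      obtain ⟨v, rfl⟩ := canon_base hV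
      have hlen : ((trV opAr (.cv v) :: List.ofFn fun i : Fin (opAr σ) =>
          Tm.app (subst0 (numStar (opAr σ) i) (trC opAr C')) c) : List (Tm (CV ⊕ Op))).length
          = arF (CV := CV) opAr (.inr σ) := by simp [arF]
      refine ((bt_ertg hr hC c (i :: p') l).trans
        (bt_step (red_opc opAr σ (.cv v) C' c) (i :: p') l)).trans
        ((btat_child hlen i p' l).trans ?_)
      cases i with
      | zero =>
        simp only [List.getElem?_cons_zero, Option.some.injEq, exists_eq_left']
        rw [btat_cv v p' l]
        constructor
        · rintro ⟨rfl, rfl⟩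
          exact Mixed.opParam hr
        · intro hm
          cases hm with
          | ret hr' _ =>
            exact absurd (ertg_normal_unique hr hnopc hr' (fun K => nostep_ret)) (by simp)
          | opParam hr' =>
            have heq := ertg_normal_unique hr hnopc hr' (fun K => nostep_opc)
            injection heq with h1 h2 h3
            injection h2 with h2
            subst h2
            exact ⟨rfl, rfl⟩
      | succ j =>
        simp only [List.getElem?_cons_succ, List.getElem?_ofFn, List.ofFnNthVal]
        by_cases hj : j < opAr σ
        · simp only [dif_pos hj, Option.some.injEq, exists_eq_left']
          have hnum : VTy cvTy opPar opAr [] (.num j (opAr σ) : Val CV Op) (.enum (opAr σ)) :=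
            VTy.num hj
          have hsub_ty : CTy cvTy opPar opAr [] (subst0C (.num j (opAr σ)) C') T :=
            subst0C_ty hC' hnum
          have e1 : subst0 (numStar (opAr σ) (↑(⟨j, hj⟩ : Fin (opAr σ)))) (trC opAr C')
              = trC opAr (subst0C (.num j (opAr σ)) C') :=
            (trC_subst0C hC' hnum).symm
          rw [e1]
          refine (ih hsub_ty l).trans ?_
          constructor
          · intro hm
            exact Mixed.opChild hr hj hm
          · intro hm
            cases hm with
            | ret hr' _ =>
              exact absurd (ertg_normal_unique hr hnopc hr' (fun K => nostep_ret)) (by simp)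
            | opChild hr' hj' hm' =>
              have heq := ertg_normal_unique hr hnopc hr' (fun K => nostep_opc)
              injection heq with h1 h2 h3
              subst h1
              subst h3
              exact hm'
        · simp only [dif_neg hj]
          constructor
          · rintro ⟨Mi, hMi, -⟩
            cases hMi
          · intro hm
            cases hm with
            | ret hr' _ =>
              exact absurd (ertg_normal_unique hr hnopc hr' (fun K => nostep_ret)) (by simp)
            | opChild hr' hj' hm' =>
              have heq := ertg_normal_unique hr hnopc hr' (fun K => nostep_opc)
              injection heq with h1 h2 h3
              subst h1
              exact absurd hj' hj

end EPCF

open LamY LamY.Tm EPCF in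
/-- For any closed EPCF computation `⊢ C : T` and any continuation
`⊢ c : T* → o`, the Böhm tree of `C* c` equals the effect tree of `C` in
which every leaf `return(V)` has been replaced by the Böhm tree of `c V*`. -/
theorem cps_computes_effect_tree {BV CV Op : Type}
    (cvTy : CV → BV) (opPar : Op → BV) (opAr : Op → ℕ)
    (C : Comp CV Op) (T : ETy BV) (c : Tm (CV ⊕ Op))
    (hC : CTy cvTy opPar opAr [] C T)
    (hc : HasTy (arF opAr) [] c (Ty.arr (trTy T) .o)) :
    ∀ (p : List ℕ) (l : Option (CV ⊕ Op)),
      BTAt (arF opAr) (Tm.app (trC opAr C) c) p l ↔ Mixed opAr c C p l := by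
  intro p l
  exact main_aux c p hC l
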